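/- arXiv:1009.3258 — 4 statements merged into one kernel-verified Lean document; each statement's English description precedes it below -/
import Mathlib

section
/- There is no bounded function f : 𝔻 → ℝ (twice continuously differentiable) on the open unit disk satisfying ∇²f(z) = 1/(1 - |z|²)² for all z in 𝔻, where ∇² = 4∂∂̄ is the Laplacian. -/
open Complex Metric

/-- The Laplacian `∂²/∂x² + ∂²/∂y²` of a real-valued function on `ℂ ≅ ℝ²`. -/
noncomputable def laplacian (f : ℂ → ℝ) (z : ℂ) : ℝ :=
  iteratedFDeriv ℝ 2 f z ![1, 1] + iteratedFDeriv ℝ 2 f z ![Complex.I, Complex.I]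

open MeasureTheory intervalIntegral Set

-- Fubini on a rectangle for continuous functions
lemma swap_helper {a b c d : ℝ} (hab : a ≤ b) (hcd : c ≤ d) {F : ℝ → ℝ → ℝ}
    (hF : ContinuousOn (fun p : ℝ × ℝ => F p.1 p.2) (Icc a b ×ˢ Icc c d)) :
    ∫ x in a..b, ∫ y in c..d, F x y = ∫ y in c..d, ∫ x in a..b, F x y := by
  rw [intervalIntegral.integral_of_le hab, intervalIntegral.integral_of_le hcd]
  simp_rw [intervalIntegral.integral_of_le hab, intervalIntegral.integral_of_le hcd]
  apply MeasureTheory.integral_integral_swap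
  have h1 : IntegrableOn (Function.uncurry F) (Icc a b ×ˢ Icc c d) (volume.prod volume) := by
    have := hF.integrableOn_compact (isCompact_Icc.prod isCompact_Icc) (μ := volume.prod volume)
    exact this
  have h2 : IntegrableOn (Function.uncurry F) (Ioc a b ×ˢ Ioc c d) (volume.prod volume) :=
    h1.mono_set (Set.prod_mono Ioc_subset_Icc_self Ioc_subset_Icc_self)
  rwa [IntegrableOn, ← Measure.prod_restrict] at h2

-- rotation invariance of the diagonal second derivative, no symmetry needed
lemma rot_inv (T : ℂ →L[ℝ] ℂ →L[ℝ] ℝ) (w : ℂ) :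
    T w w + T (I * w) (I * w) = Complex.normSq w * (T 1 1 + T I I) := by
  have expand : ∀ x y : ℂ, T x y =
      x.re * y.re * T 1 1 + x.re * y.im * T 1 I + x.im * y.re * T I 1 + x.im * y.im * T I I := by
    intro x y
    have hx : x = x.re • (1:ℂ) + x.im • I := by
      simp [Complex.real_smul]
    have hy : y = y.re • (1:ℂ) + y.im • I := by
      simp [Complex.real_smul]
    nth_rewrite 1 [hx, hy]
    simp only [map_add, _root_.map_smul, ContinuousLinearMap.add_apply,
      ContinuousLinearMap.coe_smul', Pi.smul_apply, smul_eq_mul]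
    ring
  rw [expand w w, expand (I*w) (I*w)]
  simp only [Complex.mul_re, Complex.mul_im, Complex.I_re, Complex.I_im, Complex.normSq_apply]
  ring

noncomputable def uu (θ : ℝ) : ℂ := Complex.exp (θ * I)

lemma uu_norm (θ : ℝ) : ‖uu θ‖ = 1 := by
  simp [uu, Complex.norm_exp]

lemma norm_smul_uu (r θ : ℝ) : ‖r • uu θ‖ = |r| := by
  rw [norm_smul, uu_norm, Real.norm_eq_abs, mul_one]

lemma uu_hasDerivAt (θ : ℝ) : HasDerivAt uu (I * uu θ) θ := by
  have h1 : HasDerivAt (fun z : ℂ => Complex.exp (z * I)) (Complex.exp ((θ:ℂ) * I) * I) (θ:ℂ) := by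
    exact (Complex.hasDerivAt_exp ((θ:ℂ) * I)).comp (θ:ℂ) (by simpa using hasDerivAt_mul_const I)
  have h2 := h1.comp_ofReal
  simp only [uu]
  convert h2 using 1
  · rfl
  exact mul_comm _ _

lemma uu_cont : Continuous uu :=
  Complex.continuous_exp.comp (Complex.continuous_ofReal.mul continuous_const)

lemma uu_zero : uu 0 = 1 := by simp [uu]

lemma uu_two_pi : uu (2 * Real.pi) = 1 := by
  have : ((2 * Real.pi : ℝ) : ℂ) * I = 2 * (Real.pi : ℂ) * I := by push_cast; ring
  rw [uu, this]
  exact Complex.exp_two_pi_mul_I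

lemma smul_uu_hasDerivAt (θ s : ℝ) : HasDerivAt (fun t : ℝ => t • uu θ) (uu θ) s := by
  simpa using (hasDerivAt_id s).smul_const (uu θ)

lemma smul_uu_hasDerivAt_theta (s θ : ℝ) :
    HasDerivAt (fun θ' : ℝ => s • uu θ') (s • (I * uu θ)) θ :=
  (uu_hasDerivAt θ).const_smul s

lemma curve_cont : Continuous (fun p : ℝ × ℝ => p.1 • uu p.2) :=
  continuous_fst.smul (uu_cont.comp continuous_snd)

lemma smul_uu_mem {r : ℝ} (θ : ℝ) (h : |r| < 1) : r • uu θ ∈ ball (0:ℂ) 1 := by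
  rw [mem_ball_zero_iff, norm_smul_uu]; exact h

/-- integrand for the angular average of f -/
noncomputable def ff (f : ℂ → ℝ) (s θ : ℝ) : ℝ := f (s • uu θ)
/-- radial derivative integrand -/
noncomputable def FF (f : ℂ → ℝ) (s θ : ℝ) : ℝ := fderiv ℝ f (s • uu θ) (uu θ)
/-- flux integrand -/
noncomputable def WW (f : ℂ → ℝ) (s θ : ℝ) : ℝ := fderiv ℝ f (s • uu θ) (s • uu θ)
/-- angular test function -/
noncomputable def PP (f : ℂ → ℝ) (s θ : ℝ) : ℝ := fderiv ℝ f (s • uu θ) (I * uu θ)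
/-- θ-derivative of PP -/
noncomputable def Pd (f : ℂ → ℝ) (s θ : ℝ) : ℝ :=
  fderiv ℝ (fderiv ℝ f) (s • uu θ) (s • (I * uu θ)) (I * uu θ)
    + fderiv ℝ f (s • uu θ) (I * (I * uu θ))
/-- s-derivative of WW -/
noncomputable def gg (f : ℂ → ℝ) (s θ : ℝ) : ℝ :=
  fderiv ℝ (fderiv ℝ f) (s • uu θ) (uu θ) (s • uu θ) + fderiv ℝ f (s • uu θ) (uu θ)

section derivs
variable {f : ℂ → ℝ}

lemma hasDerivAt_ff (hfd : ∀ z ∈ ball (0:ℂ) 1, HasFDerivAt f (fderiv ℝ f z) z) {s : ℝ} (hs : |s| < 1) (θ : ℝ) :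
    HasDerivAt (fun t : ℝ => ff f t θ) (FF f s θ) s :=
  (hfd _ (smul_uu_mem θ hs)).comp_hasDerivAt s (smul_uu_hasDerivAt θ s)

lemma hasDerivAt_WW
    (hD1d : ∀ z ∈ ball (0:ℂ) 1, HasFDerivAt (fderiv ℝ f) (fderiv ℝ (fderiv ℝ f) z) z) {s : ℝ} (hs : |s| < 1) (θ : ℝ) :
    HasDerivAt (fun t : ℝ => WW f t θ) (gg f s θ) s := by
  have hc : HasDerivAt (fun t : ℝ => fderiv ℝ f (t • uu θ))
      (fderiv ℝ (fderiv ℝ f) (s • uu θ) (uu θ)) s :=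
    (hD1d _ (smul_uu_mem θ hs)).comp_hasDerivAt s (smul_uu_hasDerivAt θ s)
  exact hc.clm_apply (smul_uu_hasDerivAt θ s)

lemma hasDerivAt_PP
    (hD1d : ∀ z ∈ ball (0:ℂ) 1, HasFDerivAt (fderiv ℝ f) (fderiv ℝ (fderiv ℝ f) z) z) {s : ℝ} (hs : |s| < 1) (θ : ℝ) :
    HasDerivAt (fun θ' : ℝ => PP f s θ') (Pd f s θ) θ := by
  have hc : HasDerivAt (fun θ' : ℝ => fderiv ℝ f (s • uu θ'))
      (fderiv ℝ (fderiv ℝ f) (s • uu θ) (s • (I * uu θ))) θ :=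
    (hD1d _ (smul_uu_mem θ hs)).comp_hasDerivAt θ (smul_uu_hasDerivAt_theta s θ)
  exact hc.clm_apply ((uu_hasDerivAt θ).const_mul I)

end derivs

/-- the key pointwise identity -/
lemma gg_eq {f : ℂ → ℝ}
    (lap2 : ∀ z ∈ ball (0:ℂ) 1,
      fderiv ℝ (fderiv ℝ f) z 1 1 + fderiv ℝ (fderiv ℝ f) z I I = 1 / (1 - ‖z‖^2)^2)
    {s : ℝ} (hs : |s| < 1) (θ : ℝ) :
    gg f s θ = s * (1 / (1 - s^2)^2) - Pd f s θ := by
  have hz := smul_uu_mem θ hs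
  have h1 : fderiv ℝ (fderiv ℝ f) (s • uu θ) (uu θ) (s • uu θ)
      = s * fderiv ℝ (fderiv ℝ f) (s • uu θ) (uu θ) (uu θ) := by
    rw [_root_.map_smul]; rfl
  have h2 : fderiv ℝ (fderiv ℝ f) (s • uu θ) (s • (I * uu θ)) (I * uu θ)
      = s * fderiv ℝ (fderiv ℝ f) (s • uu θ) (I * uu θ) (I * uu θ) := by
    rw [_root_.map_smul]; rfl
  have h3 : I * (I * uu θ) = -(uu θ) := by rw [← mul_assoc, I_mul_I, neg_one_mul]
  have h4 : fderiv ℝ f (s • uu θ) (I * (I * uu θ)) = - fderiv ℝ f (s • uu θ) (uu θ) := by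
    rw [h3, map_neg]
  have h5 := rot_inv (fderiv ℝ (fderiv ℝ f) (s • uu θ)) (uu θ)
  have h6 : Complex.normSq (uu θ) = 1 := by
    rw [← Complex.sq_norm]
    have : ‖uu θ‖ = 1 := uu_norm θ
    rw [this]; norm_num
  have h7 := lap2 _ hz
  have h8 : ‖s • uu θ‖^2 = s^2 := by rw [norm_smul_uu, _root_.sq_abs]
  rw [h8] at h7
  rw [h6, one_mul, h7] at h5
  unfold gg Pd
  rw [h1, h2, h4]
  have h9 := congrArg (HMul.hMul s) h5
  ring_nf at h9 ⊢
  linarith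

def TT : Set (ℝ × ℝ) := {p : ℝ × ℝ | |p.1| < 1}

lemma mapsTo_curve : MapsTo (fun p : ℝ × ℝ => p.1 • uu p.2) TT (ball (0:ℂ) 1) :=
  fun p hp => smul_uu_mem p.2 hp

section cont
variable {f : ℂ → ℝ}

lemma cont_ff (hfc : ContinuousOn f (ball (0:ℂ) 1)) : ContinuousOn (fun p : ℝ × ℝ => ff f p.1 p.2) TT :=
  hfc.comp curve_cont.continuousOn mapsTo_curve

lemma cont_FF (hD1c : ContinuousOn (fderiv ℝ f) (ball (0:ℂ) 1)) : ContinuousOn (fun p : ℝ × ℝ => FF f p.1 p.2) TT :=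
  (hD1c.comp curve_cont.continuousOn mapsTo_curve).clm_apply
    (uu_cont.comp continuous_snd).continuousOn

lemma cont_WW (hD1c : ContinuousOn (fderiv ℝ f) (ball (0:ℂ) 1)) : ContinuousOn (fun p : ℝ × ℝ => WW f p.1 p.2) TT :=
  (hD1c.comp curve_cont.continuousOn mapsTo_curve).clm_apply curve_cont.continuousOn

lemma cont_gg (hD1c : ContinuousOn (fderiv ℝ f) (ball (0:ℂ) 1))
    (hD2c : ContinuousOn (fderiv ℝ (fderiv ℝ f)) (ball (0:ℂ) 1)) : ContinuousOn (fun p : ℝ × ℝ => gg f p.1 p.2) TT :=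
  (((hD2c.comp curve_cont.continuousOn mapsTo_curve).clm_apply
    (uu_cont.comp continuous_snd).continuousOn).clm_apply curve_cont.continuousOn).add
    (cont_FF hD1c)

lemma cont_Pd (hD1c : ContinuousOn (fderiv ℝ f) (ball (0:ℂ) 1))
    (hD2c : ContinuousOn (fderiv ℝ (fderiv ℝ f)) (ball (0:ℂ) 1)) : ContinuousOn (fun p : ℝ × ℝ => Pd f p.1 p.2) TT := by
  apply ContinuousOn.add
  · exact ((hD2c.comp curve_cont.continuousOn mapsTo_curve).clm_apply
      (continuous_fst.smul (continuous_const.mul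
        (uu_cont.comp continuous_snd))).continuousOn).clm_apply
      (continuous_const.mul (uu_cont.comp continuous_snd)).continuousOn
  · exact (hD1c.comp curve_cont.continuousOn mapsTo_curve).clm_apply
      (continuous_const.mul (continuous_const.mul (uu_cont.comp continuous_snd))).continuousOn

end cont

-- section integrability helpers
lemma sect_s {F : ℝ × ℝ → ℝ} (hF : ContinuousOn F TT) (θ : ℝ) {a b : ℝ}
    (h : ∀ s ∈ uIcc a b, |s| < 1) :
    IntervalIntegrable (fun s => F (s, θ)) volume a b := by
  apply ContinuousOn.intervalIntegrable
  exact hF.comp ((continuous_id.prodMk continuous_const).continuousOn) (fun s hs => h s hs)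

lemma sect_th {F : ℝ × ℝ → ℝ} (hF : ContinuousOn F TT) {s : ℝ} (hs : |s| < 1) (a b : ℝ) :
    IntervalIntegrable (fun θ => F (s, θ)) volume a b := by
  apply ContinuousOn.intervalIntegrable
  exact hF.comp ((continuous_const.prodMk continuous_id).continuousOn) (fun θ _ => hs)

section main

lemma habs_aux {R : ℝ} (hR1 : 1/2 ≤ R) (hR2 : R < 1) :
    ∀ s ∈ uIcc (1/2 : ℝ) R, |s| < 1 := by
  rw [uIcc_of_le hR1]
  intro s hs
  rw [abs_lt]
  exact ⟨by linarith [hs.1], lt_of_le_of_lt hs.2 hR2⟩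

lemma stepB {f : ℂ → ℝ}
    (hD1d : ∀ z ∈ ball (0:ℂ) 1, HasFDerivAt (fderiv ℝ f) (fderiv ℝ (fderiv ℝ f) z) z)
    (hD1c : ContinuousOn (fderiv ℝ f) (ball (0:ℂ) 1))
    (hD2c : ContinuousOn (fderiv ℝ (fderiv ℝ f)) (ball (0:ℂ) 1))
    (lap2 : ∀ z ∈ ball (0:ℂ) 1,
      fderiv ℝ (fderiv ℝ f) z 1 1 + fderiv ℝ (fderiv ℝ f) z I I = 1 / (1 - ‖z‖^2)^2)
    {R : ℝ} (hR1 : 1/2 ≤ R) (hR2 : R < 1) :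
    (∫ θ in (0:ℝ)..(2*Real.pi), WW f R θ)
      = (∫ θ in (0:ℝ)..(2*Real.pi), WW f (1/2:ℝ) θ)
        + (Real.pi * (1-R^2)⁻¹ - Real.pi * (1-(1/2:ℝ)^2)⁻¹) := by
  have hπ := Real.pi_pos
  have habs := habs_aux hR1 hR2
  have hhalf : |(1/2 : ℝ)| < 1 := by rw [abs_lt]; constructor <;> norm_num
  have hRa : |R| < 1 := habs R (by rw [uIcc_of_le hR1]; exact ⟨hR1, le_refl R⟩)
  have h1 : ∀ θ : ℝ, WW f R θ - WW f (1/2) θ = ∫ s in (1/2:ℝ)..R, gg f s θ := by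
    intro θ
    exact (intervalIntegral.integral_eq_sub_of_hasDerivAt
      (fun s hs => hasDerivAt_WW hD1d (habs s hs) θ)
      (sect_s (cont_gg hD1c hD2c) θ habs)).symm
  have intWW : ∀ {s : ℝ}, |s| < 1 →
      IntervalIntegrable (fun θ => WW f s θ) volume 0 (2*Real.pi) :=
    fun h => sect_th (cont_WW hD1c) h _ _
  have key : (∫ θ in (0:ℝ)..(2*Real.pi), WW f R θ) - (∫ θ in (0:ℝ)..(2*Real.pi), WW f (1/2:ℝ) θ)
      = Real.pi * (1-R^2)⁻¹ - Real.pi * (1-(1/2:ℝ)^2)⁻¹ := by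
    rw [← intervalIntegral.integral_sub (intWW hRa) (intWW hhalf)]
    rw [intervalIntegral.integral_congr (g := fun θ => ∫ s in (1/2:ℝ)..R, gg f s θ)
      (fun θ _ => h1 θ)]
    have hcsw : ContinuousOn (fun p : ℝ × ℝ => gg f p.2 p.1)
        (Icc (0:ℝ) (2*Real.pi) ×ˢ Icc (1/2:ℝ) R) := by
      apply ContinuousOn.comp (cont_gg hD1c hD2c) continuous_swap.continuousOn
      intro p hp
      simp only [mem_prod] at hp
      exact habs p.2 (by rw [uIcc_of_le hR1]; exact hp.2)
    rw [swap_helper (by linarith) hR1 hcsw]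
    have inner : ∀ s ∈ uIcc (1/2:ℝ) R,
        (∫ θ in (0:ℝ)..(2*Real.pi), gg f s θ) = 2*Real.pi * (s * (1/(1-s^2)^2)) := by
      intro s hs
      have hs' := habs s hs
      rw [intervalIntegral.integral_congr (g := fun θ => s*(1/(1-s^2)^2) - Pd f s θ)
        (fun θ _ => gg_eq lap2 hs' θ)]
      rw [intervalIntegral.integral_sub intervalIntegrable_const
        (sect_th (cont_Pd hD1c hD2c) hs' _ _)]
      have hPd0 : (∫ θ in (0:ℝ)..(2*Real.pi), Pd f s θ) = 0 := by
        rw [intervalIntegral.integral_eq_sub_of_hasDerivAt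
          (fun θ _ => hasDerivAt_PP hD1d hs' θ)
          (sect_th (cont_Pd hD1c hD2c) hs' _ _)]
        unfold PP
        rw [uu_two_pi, uu_zero, sub_self]
      rw [hPd0, intervalIntegral.integral_const]
      simp [smul_eq_mul]
    rw [intervalIntegral.integral_congr inner]
    have hA : ∀ s ∈ uIcc (1/2:ℝ) R,
        HasDerivAt (fun t : ℝ => Real.pi * (1-t^2)⁻¹) (2*Real.pi * (s * (1/(1-s^2)^2))) s := by
      intro s hs
      have hs' := habs s hs
      have hs2 : s^2 < 1 := by
        have := abs_lt.1 hs'; nlinarith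
      have hne : 1 - s^2 ≠ 0 := by nlinarith
      have h0 : HasDerivAt (fun t : ℝ => 1 - t^2) (0 - 2*s) s := by
        have := (hasDerivAt_pow 2 s).const_sub (1:ℝ)
        simpa using this
      have h2 := (h0.inv hne).const_mul Real.pi
      convert h2 using 1
      all_goals first | rfl | (field_simp; ring)
    have hInt : IntervalIntegrable (fun s : ℝ => 2*Real.pi * (s * (1/(1-s^2)^2)))
        volume (1/2) R := by
      apply ContinuousOn.intervalIntegrable
      apply ContinuousOn.mul continuousOn_const
      apply ContinuousOn.mul continuousOn_id
      apply ContinuousOn.div continuousOn_const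
      · fun_prop
      · intro s hs
        have hs' := habs s hs
        have h2 : s^2 < 1 := by have := abs_lt.1 hs'; nlinarith
        exact pow_ne_zero 2 (by nlinarith)
    rw [intervalIntegral.integral_eq_sub_of_hasDerivAt hA hInt]
  linarith [key]

end main

lemma stepA {f : ℂ → ℝ}
    (hfd : ∀ z ∈ ball (0:ℂ) 1, HasFDerivAt f (fderiv ℝ f z) z)
    (hfc : ContinuousOn f (ball (0:ℂ) 1))
    (hD1c : ContinuousOn (fderiv ℝ f) (ball (0:ℂ) 1))
    {R : ℝ} (hR1 : 1/2 ≤ R) (hR2 : R < 1) :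
    (∫ θ in (0:ℝ)..(2*Real.pi), ff f R θ) - (∫ θ in (0:ℝ)..(2*Real.pi), ff f (1/2:ℝ) θ)
      = ∫ r in (1/2:ℝ)..R, (∫ θ in (0:ℝ)..(2*Real.pi), FF f r θ) := by
  have hπ := Real.pi_pos
  have habs := habs_aux hR1 hR2
  have hhalf : |(1/2 : ℝ)| < 1 := by rw [abs_lt]; constructor <;> norm_num
  have hRa : |R| < 1 := habs R (by rw [uIcc_of_le hR1]; exact ⟨hR1, le_refl R⟩)
  have h1 : ∀ θ : ℝ, ff f R θ - ff f (1/2) θ = ∫ s in (1/2:ℝ)..R, FF f s θ := by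
    intro θ
    exact (intervalIntegral.integral_eq_sub_of_hasDerivAt
      (fun s hs => hasDerivAt_ff hfd (habs s hs) θ)
      (sect_s (cont_FF hD1c) θ habs)).symm
  have intff : ∀ {s : ℝ}, |s| < 1 →
      IntervalIntegrable (fun θ => ff f s θ) volume 0 (2*Real.pi) :=
    fun h => sect_th (cont_ff hfc) h _ _
  rw [← intervalIntegral.integral_sub (intff hRa) (intff hhalf)]
  rw [intervalIntegral.integral_congr (g := fun θ => ∫ s in (1/2:ℝ)..R, FF f s θ)
    (fun θ _ => h1 θ)]
  have hcsw : ContinuousOn (fun p : ℝ × ℝ => FF f p.2 p.1)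
      (Icc (0:ℝ) (2*Real.pi) ×ˢ Icc (1/2:ℝ) R) := by
    apply ContinuousOn.comp (cont_FF hD1c) continuous_swap.continuousOn
    intro p hp
    simp only [mem_prod] at hp
    exact habs p.2 (by rw [uIcc_of_le hR1]; exact hp.2)
  exact swap_helper (by linarith) hR1 hcsw

set_option maxHeartbeats 2000000 in
theorem main_contradiction {f : ℂ → ℝ} {M : ℝ}
    (hM : ∀ z ∈ ball (0:ℂ) 1, |f z| ≤ M)
    (hfd : ∀ z ∈ ball (0:ℂ) 1, HasFDerivAt f (fderiv ℝ f z) z)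
    (hD1d : ∀ z ∈ ball (0:ℂ) 1, HasFDerivAt (fderiv ℝ f) (fderiv ℝ (fderiv ℝ f) z) z)
    (hfc : ContinuousOn f (ball (0:ℂ) 1))
    (hD1c : ContinuousOn (fderiv ℝ f) (ball (0:ℂ) 1))
    (hD2c : ContinuousOn (fderiv ℝ (fderiv ℝ f)) (ball (0:ℂ) 1))
    (lap2 : ∀ z ∈ ball (0:ℂ) 1,
      fderiv ℝ (fderiv ℝ f) z 1 1 + fderiv ℝ (fderiv ℝ f) z I I = 1 / (1 - ‖z‖^2)^2) :
    False := by
  have hπ := Real.pi_pos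
  have M0 : 0 ≤ M := le_trans (abs_nonneg _) (hM 0 (mem_ball_self one_pos))
  obtain ⟨C, hCdef⟩ : ∃ C : ℝ,
      C = (∫ θ in (0:ℝ)..(2*Real.pi), WW f (1/2:ℝ) θ) - Real.pi * (1-(1/2:ℝ)^2)⁻¹ := ⟨_, rfl⟩
  have QB : ∀ R : ℝ, 1/2 ≤ R → R < 1 →
      (∫ θ in (0:ℝ)..(2*Real.pi), FF f R θ) = (C + Real.pi * (1-R^2)⁻¹)/R := by
    intro R hR1 hR2
    have hWB := stepB hD1d hD1c hD2c lap2 hR1 hR2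
    have e : ∀ θ : ℝ, WW f R θ = R * FF f R θ := fun θ =>
      (fderiv ℝ f (R • uu θ)).map_smul R (uu θ)
    rw [intervalIntegral.integral_congr (g := fun θ => R * FF f R θ)
      (fun θ _ => e θ)] at hWB
    rw [intervalIntegral.integral_const_mul] at hWB
    have hR0 : R ≠ 0 := by linarith
    rw [eq_div_iff hR0, mul_comm, hWB, hCdef]
    ring
  -- choice of R
  obtain ⟨K, hKdef⟩ : ∃ K : ℝ, K = 8*M + (4* |C| + 4)/Real.pi := ⟨_, rfl⟩
  have hKpos : 0 < K := by
    have h1 : (0:ℝ) < 4* |C| + 4 := by linarith [abs_nonneg C]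
    have h2 := div_pos h1 hπ
    rw [hKdef]
    linarith
  obtain ⟨R, hRdef⟩ : ∃ R : ℝ, R = 1 - (1/2)*Real.exp (-K) := ⟨_, rfl⟩
  have hexp1 : Real.exp (-K) ≤ 1 := by
    rw [← Real.exp_zero]
    exact Real.exp_le_exp.2 (by linarith)
  have hexp0 : 0 < Real.exp (-K) := Real.exp_pos _
  have hR1 : 1/2 ≤ R := by rw [hRdef]; nlinarith
  have hR2 : R < 1 := by rw [hRdef]; nlinarith
  have habs := habs_aux hR1 hR2
  have hhalf : |(1/2 : ℝ)| < 1 := by rw [abs_lt]; constructor <;> norm_num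
  have hRa : |R| < 1 := habs R (by rw [uIcc_of_le hR1]; exact ⟨hR1, le_refl R⟩)
  -- step A with QB
  have stA : (∫ θ in (0:ℝ)..(2*Real.pi), ff f R θ) - (∫ θ in (0:ℝ)..(2*Real.pi), ff f (1/2:ℝ) θ)
      = ∫ r in (1/2:ℝ)..R, (C + Real.pi * (1-r^2)⁻¹)/r := by
    rw [stepA hfd hfc hD1c hR1 hR2]
    apply intervalIntegral.integral_congr
    intro r hr
    rw [uIcc_of_le hR1] at hr
    exact QB r hr.1 (lt_of_le_of_lt hr.2 hR2)
  -- bounds on the angular averages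
  have bound : ∀ {s : ℝ}, |s| < 1 →
      |∫ θ in (0:ℝ)..(2*Real.pi), ff f s θ| ≤ 2*Real.pi*M := by
    intro s hs
    have h := intervalIntegral.norm_integral_le_of_norm_le_const
      (C := M) (f := fun θ => ff f s θ) (a := 0) (b := 2*Real.pi)
      (fun θ _ => by rw [Real.norm_eq_abs]; exact hM _ (smul_uu_mem θ hs))
    rw [Real.norm_eq_abs, sub_zero] at h
    have h2 : |2*Real.pi| = 2*Real.pi := abs_of_pos (by linarith)
    rw [h2] at h
    linarith
  -- pointwise lower bound for the integrand
  have ptwise : ∀ r ∈ Icc (1/2:ℝ) R,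
      (Real.pi/2) * (1/(1-r)) - 2* |C| ≤ (C + Real.pi * (1-r^2)⁻¹)/r := by
    intro r hr
    obtain ⟨hr1, hr2⟩ := hr
    have h0 : 0 < r := by linarith
    have h1 : r < 1 := lt_of_le_of_lt hr2 hR2
    have h2 : 0 < 1 - r := by linarith
    have h3 : 0 < 1 - r^2 := by nlinarith
    have k1 : -(2* |C|) ≤ C/r := by
      rw [le_div_iff₀ h0]
      nlinarith [neg_abs_le C, abs_nonneg C,
        mul_nonneg (abs_nonneg C) (by linarith : (0:ℝ) ≤ r - 1/2)]
    have k2 : Real.pi/(2*(1-r)) ≤ Real.pi/(r*(1-r^2)) := by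
      rw [div_le_div_iff₀ (by linarith) (mul_pos h0 h3)]
      nlinarith [mul_le_mul_of_nonneg_left (by nlinarith : r*(1-r^2) ≤ 2*(1-r)) Real.pi_pos.le]
    have e2 : (C + Real.pi*(1-r^2)⁻¹)/r = C/r + Real.pi/(r*(1-r^2)) := by
      rw [add_div, ← div_eq_mul_inv, div_div, mul_comm (1-r^2) r]
    have e3 : (Real.pi/2)*(1/(1-r)) = Real.pi/(2*(1-r)) := by
      rw [div_mul_div_comm, mul_one]
    rw [e2, e3]
    linarith
  -- integrability of both comparison functions
  have intL : IntervalIntegrable (fun r => (Real.pi/2)*(1/(1-r)) - 2* |C|) volume (1/2) R := by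
    apply ContinuousOn.intervalIntegrable
    apply ContinuousOn.sub _ continuousOn_const
    apply ContinuousOn.mul continuousOn_const
    apply ContinuousOn.div continuousOn_const (by fun_prop)
    intro r hr
    rw [uIcc_of_le hR1] at hr
    have : r < 1 := lt_of_le_of_lt hr.2 hR2
    intro hcon
    have : (1:ℝ) - r > 0 := by linarith
    linarith [hcon ▸ this]
  have intR : IntervalIntegrable (fun r => (C + Real.pi*(1-r^2)⁻¹)/r) volume (1/2) R := by
    apply ContinuousOn.intervalIntegrable
    refine ContinuousOn.div ?_ continuousOn_id ?_
    · apply ContinuousOn.add continuousOn_const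
      apply ContinuousOn.mul continuousOn_const
      apply ContinuousOn.inv₀ (by fun_prop)
      intro r hr
      rw [uIcc_of_le hR1] at hr
      have h1 : r < 1 := lt_of_le_of_lt hr.2 hR2
      have : 0 < 1 - r^2 := by nlinarith [hr.1]
      linarith
    · intro r hr
      rw [uIcc_of_le hR1] at hr
      have : (0:ℝ) < r := by linarith [hr.1]
      exact ne_of_gt this
  have mono := intervalIntegral.integral_mono_on hR1 intL intR ptwise
  -- FTC for the lower comparison integral
  have ftcL : (∫ r in (1/2:ℝ)..R, ((Real.pi/2)*(1/(1-r)) - 2* |C|))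
      = (-(Real.pi/2)*Real.log (1-R) - 2* |C| * R)
        - (-(Real.pi/2)*Real.log (1-(1/2:ℝ)) - 2* |C| * (1/2)) := by
    apply intervalIntegral.integral_eq_sub_of_hasDerivAt _ intL
    intro r hr
    rw [uIcc_of_le hR1] at hr
    have h2 : 0 < 1 - r := by have := lt_of_le_of_lt hr.2 hR2; linarith
    have h0 : HasDerivAt (fun t : ℝ => 1 - t) (-1) r := by
      simpa using (hasDerivAt_id r).const_sub (1:ℝ)
    have hlog := (Real.hasDerivAt_log (ne_of_gt h2)).comp r h0
    have hd := (hlog.const_mul (-(Real.pi/2))).sub ((hasDerivAt_id r).const_mul (2* |C|))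
    convert hd using 1
    · funext y; simp only [Pi.sub_apply, Function.comp, id]
    field_simp
  have hlog1mR : Real.log (1-R) = Real.log (1/2) - K := by
    have h : (1:ℝ) - R = (1/2)*Real.exp (-K) := by rw [hRdef]; ring
    rw [h, Real.log_mul (by norm_num) (Real.exp_ne_zero _), Real.log_exp]
    ring
  have hKpi : (Real.pi/2)*K = 4*Real.pi*M + 2* |C| + 2 := by
    rw [hKdef]
    field_simp
    ring
  have h12 : (1:ℝ) - 1/2 = 1/2 := by norm_num
  have E1 : (∫ r in (1/2:ℝ)..R, ((Real.pi/2)*(1/(1-r)) - 2* |C|))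
      = (Real.pi/2)*K - 2* |C| * R + |C| := by
    rw [ftcL, hlog1mR, h12]
    ring
  have d1 : (∫ θ in (0:ℝ)..(2*Real.pi), ff f R θ) ≤ 2*Real.pi*M :=
    le_trans (le_abs_self _) (bound hRa)
  have d2 : -(∫ θ in (0:ℝ)..(2*Real.pi), ff f (1/2:ℝ) θ) ≤ 2*Real.pi*M :=
    le_trans (neg_le_abs _) (bound hhalf)
  have hCR : |C| * R ≤ |C| := by nlinarith [mul_nonneg (abs_nonneg C) (le_of_lt (by linarith : (0:ℝ) < 1 - R))]
  linarith [mono, stA, E1, hKpi, d1, d2, hCR, abs_nonneg C]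

/-- There is no bounded C² function on the open unit disk whose Laplacian is
`1/(1-|z|²)²`. -/
theorem no_bounded_with_laplacian_eq :
    ¬ ∃ f : ℂ → ℝ, ContDiffOn ℝ 2 f (ball (0 : ℂ) 1) ∧
      (∃ M : ℝ, ∀ z ∈ ball (0 : ℂ) 1, |f z| ≤ M) ∧
      (∀ z ∈ ball (0 : ℂ) 1, laplacian f z = 1 / (1 - ‖z‖ ^ 2) ^ 2) := by
  rintro ⟨f, hf, ⟨M, hM⟩, hlap⟩
  have hB : IsOpen (ball (0:ℂ) 1) := isOpen_ball
  have hf1 : ContDiffOn ℝ 1 (fderiv ℝ f) (ball (0:ℂ) 1) :=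
    hf.fderiv_of_isOpen hB (by norm_num)
  have hD1c : ContinuousOn (fderiv ℝ f) (ball (0:ℂ) 1) := hf1.continuousOn
  have hD2c : ContinuousOn (fderiv ℝ (fderiv ℝ f)) (ball (0:ℂ) 1) :=
    (hf1.fderiv_of_isOpen (m := 0) hB (by norm_num)).continuousOn
  have hfc : ContinuousOn f (ball (0:ℂ) 1) := hf.continuousOn
  have hfd : ∀ z ∈ ball (0:ℂ) 1, HasFDerivAt f (fderiv ℝ f z) z := fun z hz =>
    ((hf.differentiableOn (by norm_num) z hz).differentiableAt (hB.mem_nhds hz)).hasFDerivAt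
  have hD1d : ∀ z ∈ ball (0:ℂ) 1,
      HasFDerivAt (fderiv ℝ f) (fderiv ℝ (fderiv ℝ f) z) z := fun z hz =>
    ((hf1.differentiableOn (by norm_num) z hz).differentiableAt (hB.mem_nhds hz)).hasFDerivAt
  -- the Laplacian in terms of iterated fderiv
  have lap2 : ∀ z ∈ ball (0:ℂ) 1,
      fderiv ℝ (fderiv ℝ f) z 1 1 + fderiv ℝ (fderiv ℝ f) z I I = 1 / (1 - ‖z‖^2)^2 := by
    intro z hz
    have h := hlap z hz
    simpa only [laplacian, iteratedFDeriv_two_apply, Matrix.cons_val_zero, Matrix.cons_val_one,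
      Matrix.head_cons] using h
  exact main_contradiction hM hfd hD1d hfc hD1c hD2c lap2
end

section
/- For any α > -1 and β > -1 with α ≠ β, there is no bounded C² function u on the open unit disk with ∇²u(z) = (β - α)/(1 - |z|²)² for all z ∈ 𝔻. -/
open Complex Metric

lemma my_normsq (z : ℂ) : ‖z‖ ^ 2 = z.re ^ 2 + z.im ^ 2 := by
  rw [← Complex.normSq_eq_norm_sq, Complex.normSq_apply]; ring

/-- Second derivative test: at a local max, the second derivative is ≤ 0. -/
lemma second_deriv_test {g G : ℝ → ℝ} {G' : ℝ} (hmax : IsLocalMax g 0)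
    (hg : ∀ᶠ t in nhds (0 : ℝ), HasDerivAt g (G t) t) (hG : HasDerivAt G G' 0) :
    G' ≤ 0 := by
  by_contra hpos
  push_neg at hpos
  have hG0 : G 0 = 0 := hmax.hasDerivAt_eq_zero hg.self_of_nhds
  have hslope : Filter.Tendsto (slope G 0) (nhdsWithin 0 {(0 : ℝ)}ᶜ) (nhds G') :=
    hasDerivAt_iff_tendsto_slope.1 hG
  have hev : ∀ᶠ t in nhdsWithin (0 : ℝ) {(0 : ℝ)}ᶜ, 0 < slope G 0 t :=
    hslope.eventually (eventually_gt_nhds hpos)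
  have hev' : ∀ᶠ t in nhds (0 : ℝ), t ∈ ({(0 : ℝ)}ᶜ : Set ℝ) → 0 < slope G 0 t :=
    eventually_nhdsWithin_iff.1 hev
  have hall : ∀ᶠ t in nhds (0 : ℝ),
      (HasDerivAt g (G t) t ∧ g t ≤ g 0) ∧ (t ∈ ({(0 : ℝ)}ᶜ : Set ℝ) → 0 < slope G 0 t) :=
    (hg.and hmax).and hev'
  rw [Metric.eventually_nhds_iff] at hall
  obtain ⟨δ, hδ, hδall⟩ := hall
  have hb : (0 : ℝ) < δ / 2 := by linarith
  have hmem : ∀ t ∈ Set.Icc (0 : ℝ) (δ / 2), dist t 0 < δ := by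
    intro t ht
    rw [Real.dist_eq, sub_zero, _root_.abs_of_nonneg ht.1]
    linarith [ht.2]
  have key : StrictMonoOn g (Set.Icc 0 (δ / 2)) := by
    apply strictMonoOn_of_deriv_pos (convex_Icc _ _)
    · intro t ht
      exact ((hδall (hmem t ht)).1.1).continuousAt.continuousWithinAt
    · intro t ht
      rw [interior_Icc] at ht
      have hd : dist t 0 < δ := hmem t ⟨ht.1.le, ht.2.le⟩
      have h1 := hδall hd
      rw [h1.1.1.deriv]
      have hs := h1.2 (by simpa using ne_of_gt ht.1)
      rw [slope_def_field] at hs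
      have ht0 : (0 : ℝ) < t := ht.1
      have : 0 < (G t - G 0) / (t - 0) * t := mul_pos hs ht0
      rw [hG0, sub_zero, sub_zero, div_mul_cancel₀ _ (ne_of_gt ht0)] at this
      exact this
  have h01 : g 0 < g (δ / 2) :=
    key ⟨le_refl 0, hb.le⟩ ⟨hb.le, le_refl _⟩ hb
  have h02 : g (δ / 2) ≤ g 0 := by
    have hd : dist (δ / 2) 0 < δ := by
      rw [Real.dist_eq, sub_zero, _root_.abs_of_nonneg hb.le]; linarith
    exact (hδall hd).1.2
  linarith

set_option maxHeartbeats 1000000 in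
/-- For `α, β > -1` with `α ≠ β` there is no bounded C² function `u` on the disk
with `∇²u(z) = (β-α)/(1-|z|²)²`. -/
theorem no_bounded_with_laplacian_diff (α β : ℝ) (hα : -1 < α) (hβ : -1 < β)
    (hne : α ≠ β) :
    ¬ ∃ u : ℂ → ℝ, ContDiffOn ℝ 2 u (ball (0 : ℂ) 1) ∧
      (∃ M : ℝ, ∀ z ∈ ball (0 : ℂ) 1, |u z| ≤ M) ∧
      (∀ z ∈ ball (0 : ℂ) 1, laplacian u z = (β - α) / (1 - ‖z‖ ^ 2) ^ 2) := by
  rintro ⟨u, hu, ⟨M, hM⟩, hlap⟩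
  set c : ℝ := β - α with hc
  have hc0 : c ≠ 0 := sub_ne_zero.2 (Ne.symm hne)
  set s : ℝ := if 0 < c then 1 else -1 with hs
  have habs_s : |s| = 1 := by
    by_cases h : 0 < c <;> simp [hs, h]
  have hsc : s * c = |c| := by
    by_cases h : 0 < c
    · simp [hs, h, abs_of_pos h]
    · push_neg at h
      have : c < 0 := lt_of_le_of_ne h hc0
      simp [hs, not_lt.2 h, abs_of_neg this]
  set k : ℝ := |c| / 4 with hk
  have hkpos : 0 < k := by
    have : 0 < |c| := abs_pos.2 hc0
    positivity
  set w : ℂ → ℝ := fun z => s * u z + k * Real.log (1 - ‖z‖ ^ 2) + ‖z‖ ^ 2 with hw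
  have h0mem : (0 : ℂ) ∈ ball (0 : ℂ) 1 := mem_ball_self one_pos
  have hsu : ∀ z ∈ ball (0 : ℂ) 1, s * u z ≤ M := by
    intro z hz
    calc s * u z ≤ |s * u z| := le_abs_self _
      _ = |s| * |u z| := abs_mul _ _
      _ = |u z| := by rw [habs_s, one_mul]
      _ ≤ M := hM z hz
  -- choice of radius
  set t₀ : ℝ := Real.exp ((s * u 0 - M - 1) / k) / 2 with ht₀
  have ht₀pos : 0 < t₀ := by positivity
  have hsu0 : s * u 0 ≤ M := hsu 0 h0mem
  have ht₀1 : t₀ < 1 := by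
    have hneg : (s * u 0 - M - 1) / k < 0 :=
      div_neg_of_neg_of_pos (by linarith) hkpos
    have := Real.exp_lt_one_iff.2 hneg
    rw [ht₀]; linarith
  set r : ℝ := Real.sqrt (1 - t₀) with hr
  have hr2 : r ^ 2 = 1 - t₀ := Real.sq_sqrt (by linarith)
  have hrpos : 0 < r := Real.sqrt_pos.2 (by linarith)
  have hr1 : r < 1 := by nlinarith
  have hsub : closedBall (0 : ℂ) r ⊆ ball (0 : ℂ) 1 :=
    (closedBall_subset_ball hr1)
  have hlow : ∀ z ∈ closedBall (0 : ℂ) r, t₀ ≤ 1 - ‖z‖ ^ 2 := by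
    intro z hz
    have h1 : ‖z‖ ≤ r := mem_closedBall_zero_iff.1 hz
    have h2 : ‖z‖ ^ 2 ≤ r ^ 2 := by
      apply pow_le_pow_left₀ (norm_nonneg z) h1
    rw [hr2] at h2
    linarith
  -- continuity of w on the closed ball
  have hwc : ContinuousOn w (closedBall (0 : ℂ) r) := by
    have h1 : ContinuousOn u (closedBall (0 : ℂ) r) := (hu.continuousOn).mono hsub
    have h2 : ContinuousOn (fun z : ℂ => 1 - ‖z‖ ^ 2) (closedBall (0 : ℂ) r) :=
      (continuous_const.sub ((continuous_norm).pow 2)).continuousOn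
    have h3 : ContinuousOn (fun z : ℂ => Real.log (1 - ‖z‖ ^ 2)) (closedBall (0 : ℂ) r) :=
      h2.log (fun z hz => ne_of_gt (lt_of_lt_of_le ht₀pos (hlow z hz)))
    exact ((continuousOn_const.mul h1).add (continuousOn_const.mul h3)).add
      ((continuous_norm.pow 2).continuousOn)
  obtain ⟨z₀, hz₀mem, hz₀max⟩ :=
    (isCompact_closedBall (0 : ℂ) r).exists_isMaxOn
      ⟨0, mem_closedBall_self hrpos.le⟩ hwc
  have hw0 : w 0 = s * u 0 := by simp [hw]
  -- boundary estimate
  have hlogt₀ : k * Real.log t₀ = (s * u 0 - M - 1) - k * Real.log 2 := by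
    rw [ht₀, Real.log_div (Real.exp_ne_zero _) two_ne_zero, Real.log_exp]
    field_simp
  have hbnd : ∀ z ∈ closedBall (0 : ℂ) r, ‖z‖ = r → w z < w 0 := by
    intro z hz hzr
    have hz1 : z ∈ ball (0 : ℂ) 1 := hsub hz
    have h1 : s * u z ≤ M := hsu z hz1
    have h2 : 1 - ‖z‖ ^ 2 = t₀ := by rw [hzr, hr2]; ring
    have h3 : ‖z‖ ^ 2 ≤ 1 := by rw [hzr, hr2]; linarith
    have hlog2 : 0 < k * Real.log 2 := mul_pos hkpos (Real.log_pos one_lt_two)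
    rw [hw0]
    simp only [hw]
    rw [h2]
    calc s * u z + k * Real.log t₀ + ‖z‖ ^ 2
        ≤ M + ((s * u 0 - M - 1) - k * Real.log 2) + 1 := by rw [hlogt₀] at *; linarith
      _ < s * u 0 := by linarith
  have hz₀le : ‖z₀‖ ≤ r := mem_closedBall_zero_iff.1 hz₀mem
  have h0le : w 0 ≤ w z₀ := hz₀max (mem_closedBall_self hrpos.le)
  have hz₀lt : ‖z₀‖ < r := by
    rcases lt_or_eq_of_le hz₀le with h | h
    · exact h
    · exact absurd (hbnd z₀ hz₀mem h) (by linarith)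
  have hz₀ball : z₀ ∈ ball (0 : ℂ) 1 := hsub hz₀mem
  have hloc : IsLocalMax w z₀ := by
    apply hz₀max.isLocalMax
    exact Filter.mem_of_superset (isOpen_ball.mem_nhds (mem_ball_zero_iff.2 hz₀lt))
      ball_subset_closedBall
  set x : ℝ := z₀.re with hx
  set y : ℝ := z₀.im with hy
  have hS : ‖z₀‖ ^ 2 = x ^ 2 + y ^ 2 := my_normsq z₀
  set D : ℝ := 1 - (x ^ 2 + y ^ 2) with hD
  have hDpos : 0 < D := by
    have h1 : ‖z₀‖ < 1 := mem_ball_zero_iff.1 hz₀ball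
    have h2 : ‖z₀‖ ^ 2 < 1 := by nlinarith [norm_nonneg z₀]
    rw [hS] at h2
    simp only [hD]; linarith
  -- the key directional estimate
  have key : ∀ d : ℂ, d.re ^ 2 + d.im ^ 2 = 1 →
      s * (fderiv ℝ (fderiv ℝ u) z₀ d d) +
        k * ((-(2 * D) - (2 * (x * d.re + y * d.im)) ^ 2) / D ^ 2) + 2 ≤ 0 := by
    intro d hd
    set a : ℝ := d.re with ha
    set b : ℝ := d.im with hb
    set ℓ : ℝ → ℂ := fun t => z₀ + t • d with hℓ
    have hℓ0 : ℓ 0 = z₀ := by simp [hℓ]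
    have hℓd : ∀ t : ℝ, HasDerivAt ℓ d t := by
      intro t
      have h1 : HasDerivAt (fun t : ℝ => t • d) ((1 : ℝ) • d) t :=
        (hasDerivAt_id t).smul_const d
      simpa [hℓ, one_smul] using h1.const_add z₀
    have hℓre : ∀ t : ℝ, (ℓ t).re = x + t * a := by
      intro t; simp [hℓ, Complex.add_re, Complex.real_smul, Complex.mul_re, ha, hx]
    have hℓim : ∀ t : ℝ, (ℓ t).im = y + t * b := by
      intro t; simp [hℓ, Complex.add_im, Complex.real_smul, Complex.mul_im, hb, hy]
    set q : ℝ → ℝ := fun t => (x + t * a) ^ 2 + (y + t * b) ^ 2 with hqdef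
    have hq : ∀ t : ℝ, ‖ℓ t‖ ^ 2 = q t := by
      intro t; rw [my_normsq (ℓ t), hℓre t, hℓim t]
    have hq0 : q 0 = x ^ 2 + y ^ 2 := by simp [hqdef]
    have hqd : ∀ t : ℝ, HasDerivAt q (2 * (x + t * a) * a + 2 * (y + t * b) * b) t := by
      intro t
      have h1 : HasDerivAt (fun t : ℝ => x + t * a) a t := by
        simpa using ((hasDerivAt_id t).mul_const a).const_add x
      have h2 : HasDerivAt (fun t : ℝ => y + t * b) b t := by
        simpa using ((hasDerivAt_id t).mul_const b).const_add y
      have := (h1.pow 2).add (h2.pow 2)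
      convert this using 1
      all_goals first | rfl | (funext t; simp [hqdef]) | (push_cast; ring)
    have htend : Filter.Tendsto ℓ (nhds 0) (nhds z₀) := by
      have := (hℓd 0).continuousAt.tendsto
      rwa [hℓ0] at this
    have hev : ∀ᶠ t in nhds (0 : ℝ), ℓ t ∈ ball (0 : ℂ) 1 :=
      htend.eventually (isOpen_ball.eventually_mem hz₀ball)
    set G : ℝ → ℝ := fun t =>
      s * (fderiv ℝ u (ℓ t) d) +
        k * ((-(2 * (x + t * a) * a + 2 * (y + t * b) * b)) / (1 - q t)) +
        (2 * (x + t * a) * a + 2 * (y + t * b) * b) with hG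
    have hgd : ∀ᶠ t in nhds (0 : ℝ), HasDerivAt (fun t => w (ℓ t)) (G t) t := by
      filter_upwards [hev] with t ht
      have hqpos : 0 < 1 - q t := by
        have h1 : ‖ℓ t‖ < 1 := mem_ball_zero_iff.1 ht
        have h2 : ‖ℓ t‖ ^ 2 < 1 := by nlinarith [norm_nonneg (ℓ t)]
        rw [hq t] at h2; linarith
      have hudiff : DifferentiableAt ℝ u (ℓ t) :=
        (hu.contDiffAt (isOpen_ball.mem_nhds ht)).differentiableAt two_ne_zero
      have h1 : HasDerivAt (fun t => u (ℓ t)) (fderiv ℝ u (ℓ t) d) t :=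
        hudiff.hasFDerivAt.comp_hasDerivAt t (hℓd t)
      have h2 : HasDerivAt (fun t => 1 - q t)
          (-(2 * (x + t * a) * a + 2 * (y + t * b) * b)) t := (hqd t).const_sub 1
      have h3 : HasDerivAt (fun t => Real.log (1 - q t))
          ((-(2 * (x + t * a) * a + 2 * (y + t * b) * b)) / (1 - q t)) t :=
        h2.log (ne_of_gt hqpos)
      have hcomb := ((h1.const_mul s).add (h3.const_mul k)).add (hqd t)
      have hfun : (fun t => w (ℓ t)) =
          fun t => s * u (ℓ t) + k * Real.log (1 - q t) + q t := by
        funext t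
        simp only [hw]
        rw [hq t]
      rw [hfun, hG]
      exact hcomb
    -- derivative of G at 0
    have hcd : ContDiffAt ℝ 2 u z₀ := hu.contDiffAt (isOpen_ball.mem_nhds hz₀ball)
    have hfd : DifferentiableAt ℝ (fderiv ℝ u) z₀ :=
      ((hcd.fderiv_right (m := 1) (by norm_num)).differentiableAt one_ne_zero)
    have hc1 : HasDerivAt (fun t => fderiv ℝ u (ℓ t)) (fderiv ℝ (fderiv ℝ u) z₀ d) 0 := by
      have h0 : HasFDerivAt (fderiv ℝ u) (fderiv ℝ (fderiv ℝ u) z₀) (ℓ 0) := by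
        rw [hℓ0]; exact hfd.hasFDerivAt
      exact h0.comp_hasDerivAt 0 (hℓd 0)
    have hc2 : HasDerivAt (fun t => fderiv ℝ u (ℓ t) d)
        (fderiv ℝ (fderiv ℝ u) z₀ d d) 0 := by
      have := hc1.clm_apply (hasDerivAt_const 0 d)
      simpa using this
    have hN : HasDerivAt (fun t : ℝ => -(2 * (x + t * a) * a + 2 * (y + t * b) * b))
        (-(2 * a * a + 2 * b * b)) 0 := by
      have h1 : HasDerivAt (fun t : ℝ => x + t * a) a 0 := by
        simpa using ((hasDerivAt_id 0).mul_const a).const_add x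
      have h2 : HasDerivAt (fun t : ℝ => y + t * b) b 0 := by
        simpa using ((hasDerivAt_id 0).mul_const b).const_add y
      have := (((h1.const_mul 2).mul_const a).add ((h2.const_mul 2).mul_const b)).neg
      convert this using 1 <;> first | rfl | ring
    have hP : HasDerivAt (fun t : ℝ => 1 - q t)
        (-(2 * (x + 0 * a) * a + 2 * (y + 0 * b) * b)) 0 := (hqd 0).const_sub 1
    have hP0 : (1 : ℝ) - q 0 = D := by rw [hq0, hD]
    have hPne : (1 : ℝ) - q 0 ≠ 0 := by rw [hP0]; exact ne_of_gt hDpos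
    have hdiv : HasDerivAt
        (fun t : ℝ => (-(2 * (x + t * a) * a + 2 * (y + t * b) * b)) / (1 - q t))
        ((-(2 * a * a + 2 * b * b) * (1 - q 0) -
          (-(2 * (x + 0 * a) * a + 2 * (y + 0 * b) * b)) *
            (-(2 * (x + 0 * a) * a + 2 * (y + 0 * b) * b))) / (1 - q 0) ^ 2) 0 :=
      hN.div hP hPne
    have hlast : HasDerivAt (fun t : ℝ => 2 * (x + t * a) * a + 2 * (y + t * b) * b)
        (2 * a * a + 2 * b * b) 0 := by
      have := hN.neg
      simpa [Pi.neg_def] using this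
    set G' : ℝ := s * (fderiv ℝ (fderiv ℝ u) z₀ d d) +
        k * ((-(2 * D) - (2 * (x * a + y * b)) ^ 2) / D ^ 2) + 2 with hG'
    have hGd : HasDerivAt G G' 0 := by
      have hcomb := ((hc2.const_mul s).add (hdiv.const_mul k)).add hlast
      have heq : s * (fderiv ℝ (fderiv ℝ u) z₀ d d) +
          k * ((-(2 * a * a + 2 * b * b) * (1 - q 0) -
            (-(2 * (x + 0 * a) * a + 2 * (y + 0 * b) * b)) *
              (-(2 * (x + 0 * a) * a + 2 * (y + 0 * b) * b))) / (1 - q 0) ^ 2) +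
          (2 * a * a + 2 * b * b) = G' := by
        rw [hP0, hG']
        rw [show (2 * a * a + 2 * b * b : ℝ) = 2 by nlinarith [hd]]
        ring
      rw [← heq]
      exact hcomb
    have hmaxd : IsLocalMax (fun t => w (ℓ t)) 0 := by
      have h1 : ∀ᶠ t in nhds (0 : ℝ), w (ℓ t) ≤ w z₀ := htend.eventually hloc
      have h2 : w (ℓ 0) = w z₀ := by rw [hℓ0]
      unfold IsLocalMax IsMaxFilter
      simpa [h2] using h1
    have := second_deriv_test hmaxd hgd hGd
    rwa [hG'] at this
  -- apply in the two coordinate directions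
  have k1 := key 1 (by simp)
  have k2 := key Complex.I (by simp)
  simp only [Complex.one_re, Complex.one_im, Complex.I_re, Complex.I_im] at k1 k2
  -- convert the Laplacian hypothesis
  have hA : (fderiv ℝ (fderiv ℝ u) z₀ 1 1) + (fderiv ℝ (fderiv ℝ u) z₀ I I) = c / D ^ 2 := by
    have h := hlap z₀ hz₀ball
    unfold laplacian at h
    rw [iteratedFDeriv_two_apply, iteratedFDeriv_two_apply] at h
    simp only [Matrix.cons_val_zero, Matrix.cons_val_one, Matrix.head_cons] at h
    rw [hS] at h
    rw [← hD] at h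
    exact h
  have hD2 : (0 : ℝ) < D ^ 2 := by positivity
  have hAs : s * (fderiv ℝ (fderiv ℝ u) z₀ 1 1) + s * (fderiv ℝ (fderiv ℝ u) z₀ I I)
      = 4 * k / D ^ 2 := by
    have h1 : s * ((fderiv ℝ (fderiv ℝ u) z₀ 1 1) + (fderiv ℝ (fderiv ℝ u) z₀ I I))
        = s * (c / D ^ 2) := by rw [hA]
    have h2 : s * (c / D ^ 2) = (s * c) / D ^ 2 := by ring
    have h3 : |c| = 4 * k := by rw [hk]; ring
    rw [h2, hsc, h3] at h1
    linarith [h1]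
  have hterm : k * ((-(2 * D) - (2 * (x * 1 + y * 0)) ^ 2) / D ^ 2) +
      k * ((-(2 * D) - (2 * (x * 0 + y * 1)) ^ 2) / D ^ 2) = -(4 * k / D ^ 2) := by
    have hxy : x ^ 2 + y ^ 2 = 1 - D := by rw [hD]; ring
    have hnum : (-(2 * D) - (2 * (x * 1 + y * 0)) ^ 2) + (-(2 * D) - (2 * (x * 0 + y * 1)) ^ 2)
        = -4 := by nlinarith [hxy]
    calc k * ((-(2 * D) - (2 * (x * 1 + y * 0)) ^ 2) / D ^ 2) +
        k * ((-(2 * D) - (2 * (x * 0 + y * 1)) ^ 2) / D ^ 2)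
        = k * (((-(2 * D) - (2 * (x * 1 + y * 0)) ^ 2) +
            (-(2 * D) - (2 * (x * 0 + y * 1)) ^ 2)) / D ^ 2) := by ring
      _ = k * ((-4 : ℝ) / D ^ 2) := by rw [hnum]
      _ = -(4 * k / D ^ 2) := by ring
  linarith [add_le_add k1 k2, hAs, hterm]
end

section
/- There is no pair of corona-condition pairs {θ₁,θ₂}, {φ₁,φ₂} in H^∞(𝔻) and α > -1 such that (1+α)/(1-|w|²)² = (1/4)∇² log((|φ₁(w)|²+|φ₂(w)|²)/(|θ₁(w)|²+|θ₂(w)|²)) for all w ∈ 𝔻. -/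
open Complex Metric

noncomputable def Mlin : ℂ →L[ℝ] (ℂ →L[ℝ] ℝ) :=
  2 • ((ContinuousLinearMap.compL ℝ ℂ ℂ ℝ Complex.reCLM).comp
        (ContinuousLinearMap.mul ℝ ℂ))

lemma Mlin_apply (c v : ℂ) : Mlin c v = 2 * (c * v).re := by
  simp [Mlin]


lemma hasFDerivAt_normSq_comp {f : ℂ → ℂ} {d z : ℂ} (hf : HasDerivAt f d z) :
    HasFDerivAt (fun z => Complex.normSq (f z)) (Mlin (d * (starRingEnd ℂ) (f z))) z := by
  have hfF : HasFDerivAt f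
      (((1 : ℂ →L[ℂ] ℂ).smulRight d).restrictScalars ℝ) z :=
    hf.hasFDerivAt.restrictScalars ℝ
  have hc : HasFDerivAt (fun z => (starRingEnd ℂ) (f z))
      ((Complex.conjCLE : ℂ →L[ℝ] ℂ).comp
        (((1 : ℂ →L[ℂ] ℂ).smulRight d).restrictScalars ℝ)) z :=
    (Complex.conjCLE : ℂ →L[ℝ] ℂ).hasFDerivAt.comp z hfF
  have hmul := hfF.mul' hc
  have hre := (Complex.reCLM.hasFDerivAt).comp z hmul
  refine (hre.congr_fderiv ?_).congr_of_eventuallyEq ?_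
  · ext v
    simp [Mlin_apply, Complex.mul_re, Complex.conj_re, Complex.conj_im]
    ring
  · exact Filter.Eventually.of_forall fun z => by simp [Complex.normSq_apply]

lemma hasFDerivAt_A {f₁ f₂ : ℂ → ℂ} {e₁ e₂ z : ℂ}
    (h₁ : HasDerivAt f₁ (deriv f₁ z) z) (h₂ : HasDerivAt f₂ (deriv f₂ z) z)
    (h₁' : HasDerivAt (deriv f₁) e₁ z) (h₂' : HasDerivAt (deriv f₂) e₂ z) :
    ∃ LA : ℂ →L[ℝ] ℂ,
      HasFDerivAt (fun z => deriv f₁ z * (starRingEnd ℂ) (f₁ z)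
          + deriv f₂ z * (starRingEnd ℂ) (f₂ z)) LA z ∧
      ∀ v, LA v = (v * e₁) * (starRingEnd ℂ) (f₁ z)
          + deriv f₁ z * (starRingEnd ℂ) (v * deriv f₁ z)
          + (v * e₂) * (starRingEnd ℂ) (f₂ z)
          + deriv f₂ z * (starRingEnd ℂ) (v * deriv f₂ z) := by
  have hf₁ : HasFDerivAt f₁ (((1 : ℂ →L[ℂ] ℂ).smulRight (deriv f₁ z)).restrictScalars ℝ) z :=
    h₁.hasFDerivAt.restrictScalars ℝ
  have hf₂ : HasFDerivAt f₂ (((1 : ℂ →L[ℂ] ℂ).smulRight (deriv f₂ z)).restrictScalars ℝ) z :=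
    h₂.hasFDerivAt.restrictScalars ℝ
  have hg₁ : HasFDerivAt (deriv f₁) (((1 : ℂ →L[ℂ] ℂ).smulRight e₁).restrictScalars ℝ) z :=
    h₁'.hasFDerivAt.restrictScalars ℝ
  have hg₂ : HasFDerivAt (deriv f₂) (((1 : ℂ →L[ℂ] ℂ).smulRight e₂).restrictScalars ℝ) z :=
    h₂'.hasFDerivAt.restrictScalars ℝ
  have hc₁ : HasFDerivAt (fun z => (starRingEnd ℂ) (f₁ z))
      ((Complex.conjCLE : ℂ →L[ℝ] ℂ).comp
        (((1 : ℂ →L[ℂ] ℂ).smulRight (deriv f₁ z)).restrictScalars ℝ)) z :=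
    (Complex.conjCLE : ℂ →L[ℝ] ℂ).hasFDerivAt.comp z hf₁
  have hc₂ : HasFDerivAt (fun z => (starRingEnd ℂ) (f₂ z))
      ((Complex.conjCLE : ℂ →L[ℝ] ℂ).comp
        (((1 : ℂ →L[ℂ] ℂ).smulRight (deriv f₂ z)).restrictScalars ℝ)) z :=
    (Complex.conjCLE : ℂ →L[ℝ] ℂ).hasFDerivAt.comp z hf₂
  refine ⟨_, (hg₁.mul' hc₁).add (hg₂.mul' hc₂), fun v => ?_⟩
  simp [Complex.ext_iff, Complex.mul_re, Complex.mul_im,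
    Complex.conj_re, Complex.conj_im]
  constructor <;> ring

lemma pair_deriv (f₁ f₂ : ℂ → ℂ)
    (hd₁ : DifferentiableOn ℂ f₁ (ball (0:ℂ) 1))
    (hd₂ : DifferentiableOn ℂ f₂ (ball (0:ℂ) 1))
    (hpos : ∀ z ∈ ball (0:ℂ) 1, 0 < Complex.normSq (f₁ z) + Complex.normSq (f₂ z))
    {w : ℂ} (hw : w ∈ ball (0:ℂ) 1) :
    ∃ Φ : ℂ → (ℂ →L[ℝ] ℝ),
      (∀ z ∈ ball (0:ℂ) 1,
        HasFDerivAt (fun z => Real.log (Complex.normSq (f₁ z) + Complex.normSq (f₂ z))) (Φ z) z) ∧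
      ∃ L : ℂ →L[ℝ] (ℂ →L[ℝ] ℝ), HasFDerivAt Φ L w ∧
        L 1 1 + L I I
          = 4 * Complex.normSq (deriv f₁ w * f₂ w - deriv f₂ w * f₁ w)
              / (Complex.normSq (f₁ w) + Complex.normSq (f₂ w)) ^ 2 := by
  set S : ℂ → ℝ := fun z => Complex.normSq (f₁ z) + Complex.normSq (f₂ z) with hSdef
  set A : ℂ → ℂ := fun z => deriv f₁ z * (starRingEnd ℂ) (f₁ z)
      + deriv f₂ z * (starRingEnd ℂ) (f₂ z) with hAdef
  have hder₁ : ∀ z ∈ ball (0:ℂ) 1, HasDerivAt f₁ (deriv f₁ z) z := fun z hz =>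
    (hd₁.differentiableAt (isOpen_ball.mem_nhds hz)).hasDerivAt
  have hder₂ : ∀ z ∈ ball (0:ℂ) 1, HasDerivAt f₂ (deriv f₂ z) z := fun z hz =>
    (hd₂.differentiableAt (isOpen_ball.mem_nhds hz)).hasDerivAt
  have hS : ∀ z ∈ ball (0:ℂ) 1, HasFDerivAt S (Mlin (A z)) z := by
    intro z hz
    have h := (hasFDerivAt_normSq_comp (hder₁ z hz)).add
      (hasFDerivAt_normSq_comp (hder₂ z hz))
    rw [← map_add] at h
    exact h
  refine ⟨fun z => (S z)⁻¹ • Mlin (A z), fun z hz => (hS z hz).log (hpos z hz).ne', ?_⟩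
  -- second derivative
  have h₁' : HasDerivAt (deriv f₁) (deriv (deriv f₁) w) w :=
    (((hd₁.analyticOnNhd isOpen_ball).deriv w hw).differentiableAt).hasDerivAt
  have h₂' : HasDerivAt (deriv f₂) (deriv (deriv f₂) w) w :=
    (((hd₂.analyticOnNhd isOpen_ball).deriv w hw).differentiableAt).hasDerivAt
  obtain ⟨LA, hLA, hLAv⟩ := hasFDerivAt_A (hder₁ w hw) (hder₂ w hw) h₁' h₂'
  have hinv : HasFDerivAt (fun z => (S z)⁻¹) ((-((S w) ^ 2)⁻¹) • Mlin (A w)) w :=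
    (hasDerivAt_inv (hpos w hw).ne').comp_hasFDerivAt w (hS w hw)
  have hMl : HasFDerivAt (fun z => Mlin (A z)) (Mlin.comp LA) w :=
    Mlin.hasFDerivAt.comp w hLA
  have hΦ : HasFDerivAt (fun z => (S z)⁻¹ • Mlin (A z))
      ((S w)⁻¹ • Mlin.comp LA
        + ((-((S w) ^ 2)⁻¹) • Mlin (A w)).smulRight (Mlin (A w))) w :=
    hinv.smul hMl
  refine ⟨_, hΦ, ?_⟩
  have hS0 : S w ≠ 0 := (hpos w hw).ne'
  simp only [ContinuousLinearMap.add_apply, ContinuousLinearMap.coe_smul',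
    Pi.smul_apply, ContinuousLinearMap.coe_comp', Function.comp_apply,
    ContinuousLinearMap.smulRight_apply, Mlin_apply, hLAv,
    smul_eq_mul, ContinuousLinearMap.smul_apply]
  rw [hSdef, hAdef]
  field_simp
  simp only [Complex.normSq_apply, Complex.mul_re, Complex.mul_im,
    Complex.conj_re, Complex.conj_im, Complex.I_re, Complex.I_im,
    Complex.one_re, Complex.one_im, Complex.sub_re, Complex.sub_im,
    Complex.add_re, Complex.add_im]
  ring

lemma laplacian_log_ratio (φ₁ φ₂ θ₁ θ₂ : ℂ → ℂ)
    (hφ₁ : DifferentiableOn ℂ φ₁ (ball (0:ℂ) 1))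
    (hφ₂ : DifferentiableOn ℂ φ₂ (ball (0:ℂ) 1))
    (hθ₁ : DifferentiableOn ℂ θ₁ (ball (0:ℂ) 1))
    (hθ₂ : DifferentiableOn ℂ θ₂ (ball (0:ℂ) 1))
    (hposφ : ∀ z ∈ ball (0:ℂ) 1, 0 < Complex.normSq (φ₁ z) + Complex.normSq (φ₂ z))
    (hposθ : ∀ z ∈ ball (0:ℂ) 1, 0 < Complex.normSq (θ₁ z) + Complex.normSq (θ₂ z))
    {w : ℂ} (hw : w ∈ ball (0:ℂ) 1) :
    laplacian (fun z => Real.log ((Complex.normSq (φ₁ z) + Complex.normSq (φ₂ z))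
        / (Complex.normSq (θ₁ z) + Complex.normSq (θ₂ z)))) w
      = 4 * Complex.normSq (deriv φ₁ w * φ₂ w - deriv φ₂ w * φ₁ w)
          / (Complex.normSq (φ₁ w) + Complex.normSq (φ₂ w)) ^ 2
        - 4 * Complex.normSq (deriv θ₁ w * θ₂ w - deriv θ₂ w * θ₁ w)
          / (Complex.normSq (θ₁ w) + Complex.normSq (θ₂ w)) ^ 2 := by
  obtain ⟨Φφ, h1φ, Lφ, h2φ, h3φ⟩ := pair_deriv φ₁ φ₂ hφ₁ hφ₂ hposφ hw
  obtain ⟨Φθ, h1θ, Lθ, h2θ, h3θ⟩ := pair_deriv θ₁ θ₂ hθ₁ hθ₂ hposθ hw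
  set F : ℂ → ℝ := fun z => Real.log ((Complex.normSq (φ₁ z) + Complex.normSq (φ₂ z))
      / (Complex.normSq (θ₁ z) + Complex.normSq (θ₂ z))) with hF
  have hFd : ∀ z ∈ ball (0:ℂ) 1, HasFDerivAt F (Φφ z - Φθ z) z := by
    intro z hz
    have h := (h1φ z hz).sub (h1θ z hz)
    apply h.congr_of_eventuallyEq
    filter_upwards [isOpen_ball.mem_nhds hz] with x hx
    rw [hF]
    exact Real.log_div (hposφ x hx).ne' (hposθ x hx).ne'
  have hfd1 : fderiv ℝ F =ᶠ[nhds w] fun z => Φφ z - Φθ z := by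
    filter_upwards [isOpen_ball.mem_nhds hw] with x hx
    exact (hFd x hx).fderiv
  have h2 : fderiv ℝ (fderiv ℝ F) w = Lφ - Lθ := by
    rw [hfd1.fderiv_eq]
    exact (h2φ.sub h2θ).fderiv
  have e1 : iteratedFDeriv ℝ 2 F w ![1, 1] = (Lφ - Lθ) 1 1 := by
    rw [iteratedFDeriv_two_apply, h2]; simp
  have e2 : iteratedFDeriv ℝ 2 F w ![I, I] = (Lφ - Lθ) I I := by
    rw [iteratedFDeriv_two_apply, h2]; simp
  rw [laplacian, e1, e2]
  simp only [ContinuousLinearMap.sub_apply, ContinuousLinearMap.coe_sub', Pi.sub_apply]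
  linarith [h3φ, h3θ]

/-- `(H²)_Θ` can never be isomorphic to `(A²_α)_Φ`: there are no corona pairs
`{θ₁,θ₂}`, `{φ₁,φ₂}` and `α > -1` with
`(1+α)/(1-|w|²)² = (1/4)∇² log((|φ₁|²+|φ₂|²)/(|θ₁|²+|θ₂|²))` on the disk. -/
theorem hardy_not_isomorphic_to_bergman (α : ℝ) (hα : -1 < α)
    (θ₁ θ₂ φ₁ φ₂ : ℂ → ℂ)
    (hθ₁ : DifferentiableOn ℂ θ₁ (ball (0 : ℂ) 1))
    (hθ₂ : DifferentiableOn ℂ θ₂ (ball (0 : ℂ) 1))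
    (hφ₁ : DifferentiableOn ℂ φ₁ (ball (0 : ℂ) 1))
    (hφ₂ : DifferentiableOn ℂ φ₂ (ball (0 : ℂ) 1))
    (hθb : ∃ C : ℝ, ∀ z ∈ ball (0 : ℂ) 1,
      ‖θ₁ z‖ ≤ C ∧ ‖θ₂ z‖ ≤ C)
    (hφb : ∃ C : ℝ, ∀ z ∈ ball (0 : ℂ) 1,
      ‖φ₁ z‖ ≤ C ∧ ‖φ₂ z‖ ≤ C)
    (εθ : ℝ) (hεθ : 0 < εθ)
    (hθcorona : ∀ z ∈ ball (0 : ℂ) 1,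
      εθ ≤ ‖θ₁ z‖ ^ 2 + ‖θ₂ z‖ ^ 2)
    (εφ : ℝ) (hεφ : 0 < εφ)
    (hφcorona : ∀ z ∈ ball (0 : ℂ) 1,
      εφ ≤ ‖φ₁ z‖ ^ 2 + ‖φ₂ z‖ ^ 2)
    (heq : ∀ w ∈ ball (0 : ℂ) 1,
      (1 + α) / (1 - ‖w‖ ^ 2) ^ 2
        = (1 / 4) * laplacian (fun z =>
            Real.log ((‖φ₁ z‖ ^ 2 + ‖φ₂ z‖ ^ 2)
              / (‖θ₁ z‖ ^ 2 + ‖θ₂ z‖ ^ 2))) w) :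
    False := by
  have hα0 : (0:ℝ) < 1 + α := by linarith
  have hposφ : ∀ z ∈ ball (0:ℂ) 1, 0 < Complex.normSq (φ₁ z) + Complex.normSq (φ₂ z) := by
    intro z hz
    have := hφcorona z hz
    rw [Complex.sq_norm, Complex.sq_norm] at this
    linarith
  have hposθ : ∀ z ∈ ball (0:ℂ) 1, 0 < Complex.normSq (θ₁ z) + Complex.normSq (θ₂ z) := by
    intro z hz
    have := hθcorona z hz
    rw [Complex.sq_norm, Complex.sq_norm] at this
    linarith
  -- rewrite the function in heq
  have hFrw : (fun z => Real.log ((‖φ₁ z‖ ^ 2 + ‖φ₂ z‖ ^ 2)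
        / (‖θ₁ z‖ ^ 2 + ‖θ₂ z‖ ^ 2)))
      = fun z => Real.log ((Complex.normSq (φ₁ z) + Complex.normSq (φ₂ z))
        / (Complex.normSq (θ₁ z) + Complex.normSq (θ₂ z))) := by
    funext z
    rw [Complex.sq_norm, Complex.sq_norm, Complex.sq_norm, Complex.sq_norm]
  set W : ℂ → ℂ := fun z => deriv φ₁ z * φ₂ z - deriv φ₂ z * φ₁ z with hWdef
  -- the key lower bound
  have hkey : ∀ w ∈ ball (0:ℂ) 1,
      εφ ^ 2 * (1 + α) ≤ Complex.normSq (W w) * (1 - ‖w‖ ^ 2) ^ 2 := by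
    intro w hw
    have hlap := laplacian_log_ratio φ₁ φ₂ θ₁ θ₂ hφ₁ hφ₂ hθ₁ hθ₂ hposφ hposθ hw
    have he := heq w hw
    rw [hFrw, hlap] at he
    set Sφ := Complex.normSq (φ₁ w) + Complex.normSq (φ₂ w) with hSφ
    set Sθ := Complex.normSq (θ₁ w) + Complex.normSq (θ₂ w) with hSθ
    have hSφpos := hposφ w hw
    have hSθpos := hposθ w hw
    have hd : (0:ℝ) < (1 - ‖w‖ ^ 2) ^ 2 := by
      have h1 : ‖w‖ < 1 := by simpa using hw
      have h2 : ‖w‖ ^ 2 < 1 := by nlinarith [norm_nonneg w]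
      exact pow_pos (by linarith) 2
    have hεφSφ : εφ ≤ Sφ := by
      have := hφcorona w hw
      rw [Complex.sq_norm, Complex.sq_norm] at this
      exact this
    have h1 : (1 + α) / (1 - ‖w‖ ^ 2) ^ 2 ≤ Complex.normSq (W w) / Sφ ^ 2 := by
      rw [he]
      have hθnn : 0 ≤ Complex.normSq (deriv θ₁ w * θ₂ w - deriv θ₂ w * θ₁ w) / Sθ ^ 2 :=
        div_nonneg (Complex.normSq_nonneg _) (by positivity)
      have hWw : Complex.normSq (W w)
          = Complex.normSq (deriv φ₁ w * φ₂ w - deriv φ₂ w * φ₁ w) := by rw [hWdef]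
      rw [hWw]
      have hrg : (1:ℝ)/4 * (4 * Complex.normSq (deriv φ₁ w * φ₂ w - deriv φ₂ w * φ₁ w) / Sφ ^ 2
            - 4 * Complex.normSq (deriv θ₁ w * θ₂ w - deriv θ₂ w * θ₁ w) / Sθ ^ 2)
          = Complex.normSq (deriv φ₁ w * φ₂ w - deriv φ₂ w * φ₁ w) / Sφ ^ 2
            - Complex.normSq (deriv θ₁ w * θ₂ w - deriv θ₂ w * θ₁ w) / Sθ ^ 2 := by ring
      rw [hrg]
      linarith
    have h2 : Complex.normSq (W w) / Sφ ^ 2 ≤ Complex.normSq (W w) / εφ ^ 2 := by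
      apply div_le_div_of_nonneg_left (Complex.normSq_nonneg _) (by positivity)
      exact pow_le_pow_left₀ hεφ.le hεφSφ 2
    have h3 : (1 + α) / (1 - ‖w‖ ^ 2) ^ 2 ≤ Complex.normSq (W w) / εφ ^ 2 := h1.trans h2
    rw [div_le_div_iff₀ hd (by positivity)] at h3
    nlinarith
  -- W is nonvanishing and differentiable
  have hWdiff : DifferentiableOn ℂ W (ball (0:ℂ) 1) := by
    apply DifferentiableOn.sub
    · exact ((hφ₁.analyticOnNhd isOpen_ball).deriv.differentiableOn).mul hφ₂
    · exact ((hφ₂.analyticOnNhd isOpen_ball).deriv.differentiableOn).mul hφ₁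
  have hWne : ∀ w ∈ ball (0:ℂ) 1, W w ≠ 0 := by
    intro w hw
    have h := hkey w hw
    have : 0 < Complex.normSq (W w) := by
      by_contra hc
      push_neg at hc
      have h0 : Complex.normSq (W w) = 0 :=
        le_antisymm hc (Complex.normSq_nonneg _)
      rw [h0, zero_mul] at h
      have := mul_pos (pow_pos hεφ 2) hα0
      linarith
    exact fun h0 => by simp [h0] at this
  set h : ℂ → ℂ := fun z => (W z)⁻¹ with hhdef
  have hhdiff : DifferentiableOn ℂ h (ball (0:ℂ) 1) := hWdiff.inv hWne
  set c : ℝ := εφ * Real.sqrt (1 + α) with hcdef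
  have hc0 : 0 < c := by positivity
  have hc2 : c ^ 2 = εφ ^ 2 * (1 + α) := by
    rw [hcdef, mul_pow, Real.sq_sqrt hα0.le]
  have hnorm0 : 0 < ‖h 0‖ := by
    rw [hhdef]
    simp only [norm_pos_iff]
    exact inv_ne_zero (hWne 0 (by simp))
  -- bound on sphere of radius r
  have hbound : ∀ r : ℝ, 0 < r → r < 1 → ∀ z : ℂ, ‖z‖ = r → ‖h z‖ ≤ (1 - r ^ 2) / c := by
    intro r hr0 hr1 z hz
    have hzball : z ∈ ball (0:ℂ) 1 := by
      simp [mem_ball_zero_iff, hz, hr1]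
    have hk := hkey z hzball
    rw [hz] at hk
    have hr2 : (0:ℝ) < 1 - r ^ 2 := by nlinarith
    have hWpos : 0 < Complex.normSq (W z) := by nlinarith [Complex.normSq_nonneg (W z), sq_nonneg (1 - r^2)]
    have hsq : ‖h z‖ ^ 2 ≤ ((1 - r ^ 2) / c) ^ 2 := by
      rw [hhdef]
      simp only [norm_inv]
      rw [inv_pow, div_pow, hc2]
      have hWz : Complex.normSq (W z) = ‖W z‖ ^ 2 := by
        rw [← Complex.sq_norm]
      rw [hWz] at hk
      have hWn : (0:ℝ) < ‖W z‖ ^ 2 := by nlinarith [sq_nonneg (1 - r ^ 2), sq_nonneg ‖W z‖]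
      rw [inv_eq_one_div, div_le_div_iff₀ hWn (by positivity)]
      nlinarith
    calc ‖h z‖ = Real.sqrt (‖h z‖ ^ 2) := (Real.sqrt_sq (norm_nonneg _)).symm
      _ ≤ Real.sqrt (((1 - r ^ 2) / c) ^ 2) := Real.sqrt_le_sqrt hsq
      _ = (1 - r ^ 2) / c := Real.sqrt_sq (by positivity)
  -- choose r
  set t : ℝ := min (1/2) (c * ‖h 0‖ / 2) with htdef
  have ht0 : 0 < t := lt_min (by norm_num) (by positivity)
  have ht1 : t ≤ 1/2 := min_le_left _ _
  have ht2 : t ≤ c * ‖h 0‖ / 2 := min_le_right _ _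
  set r : ℝ := Real.sqrt (1 - t) with hrdef
  have hr2 : r ^ 2 = 1 - t := Real.sq_sqrt (by linarith)
  have hr0 : 0 < r := Real.sqrt_pos.mpr (by linarith)
  have hr1 : r < 1 := by
    have h2 : r ^ 2 < 1 := by rw [hr2]; linarith
    nlinarith
  -- maximum principle
  have hmax : ‖h 0‖ ≤ (1 - r ^ 2) / c := by
    apply Complex.norm_le_of_forall_mem_frontier_norm_le (isBounded_ball (x := (0:ℂ)) (r := r))
    · apply DifferentiableOn.diffContOnCl
      rw [closure_ball (0:ℂ) hr0.ne']
      exact hhdiff.mono (closedBall_subset_ball hr1)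
    · intro z hz
      rw [frontier_ball (0:ℂ) hr0.ne'] at hz
      exact hbound r hr0 hr1 z (mem_sphere_zero_iff_norm.mp hz)
    · exact subset_closure (mem_ball_self hr0)
  rw [hr2] at hmax
  have : (1 - (1 - t)) / c < ‖h 0‖ := by
    rw [show (1 - (1-t)) = t by ring, div_lt_iff₀ hc0]
    calc t ≤ c * ‖h 0‖ / 2 := ht2
      _ < c * ‖h 0‖ := by nlinarith
      _ = ‖h 0‖ * c := by ring
  linarith
end

section
/- If u : 𝔻 → ℝ is a bounded C² function whose Laplacian satisfies ∇²u(z) ≥ c/(1-|z|²)² for all z ∈ 𝔻 with constant c > 0, then no such u exists. -/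
open Complex Metric

open Filter Topology

/-- 1-D second derivative test at a local maximum. -/
lemma second_deriv_test_aux {φ ψ : ℝ → ℝ} {a : ℝ}
    (hmax : IsLocalMax φ 0) (hφ : ∀ᶠ t in 𝓝 (0:ℝ), HasDerivAt φ (ψ t) t)
    (hψ : HasDerivAt ψ a 0) : a ≤ 0 := by
  by_contra hpos
  push_neg at hpos
  have hψ0 : ψ 0 = 0 := by
    have h1 : deriv φ 0 = ψ 0 := hφ.self_of_nhds.deriv
    have h2 : deriv φ 0 = 0 := hmax.deriv_eq_zero
    linarith
  have hslope : ∀ᶠ t in 𝓝[≠] (0:ℝ), 0 < ψ t / t := by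
    have h1 := hasDerivAt_iff_tendsto_slope.mp hψ
    have h2 : ∀ᶠ t in 𝓝[≠] (0:ℝ), slope ψ 0 t ∈ Set.Ioi (0:ℝ) :=
      h1 (Ioi_mem_nhds hpos)
    filter_upwards [h2] with t ht
    simpa [slope_def_field, hψ0] using ht
  rw [eventually_nhdsWithin_iff] at hslope
  have hcomb := (hφ.and hmax).and hslope
  obtain ⟨ε, hε, hball⟩ := Metric.eventually_nhds_iff.mp hcomb
  have hT : (0:ℝ) < ε/2 := by linarith
  have hdist : ∀ t : ℝ, |t| ≤ ε/2 → dist t 0 < ε := by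
    intro t ht; rw [Real.dist_eq, sub_zero]; linarith
  have hmono : StrictMonoOn φ (Set.Icc 0 (ε/2)) := by
    apply strictMonoOn_of_deriv_pos (convex_Icc 0 (ε/2))
    · intro t ht
      have hd := hdist t (by rw [_root_.abs_of_nonneg ht.1]; exact ht.2)
      exact ((hball hd).1.1).continuousAt.continuousWithinAt
    · intro t ht
      rw [interior_Icc] at ht
      have hd := hdist t (by rw [_root_.abs_of_nonneg (le_of_lt ht.1)]; exact le_of_lt ht.2)
      have h1 := (hball hd).1.1
      have h2 := (hball hd).2 (by simpa using ne_of_gt ht.1)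
      rw [h1.deriv]
      rcases div_pos_iff.mp h2 with ⟨h, _⟩ | ⟨_, h⟩
      · exact h
      · linarith [ht.1]
  have hlt := hmono (Set.left_mem_Icc.mpr (le_of_lt hT)) (Set.right_mem_Icc.mpr (le_of_lt hT)) hT
  have hle : φ (ε/2) ≤ φ 0 := (hball (hdist _ (by rw [_root_.abs_of_nonneg (le_of_lt hT)]))).1.2
  linarith

/-- Derivative of a differentiable function along a line. -/
lemma line_hasDerivAt_aux {f : ℂ → ℝ} {z : ℂ} (w : ℂ) (t : ℝ)
    (hf : DifferentiableAt ℝ f (z + t • w)) :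
    HasDerivAt (fun s : ℝ => f (z + s • w)) (fderiv ℝ f (z + t • w) w) t := by
  have hline : HasDerivAt (fun s : ℝ => z + s • w) w t := by
    have h1 : HasDerivAt (fun s : ℝ => s • w) ((1:ℝ) • w) t :=
      (hasDerivAt_id t).smul_const w
    simpa using h1.const_add z
  exact hf.hasFDerivAt.comp_hasDerivAt t hline

/-- Second derivative of a C² function along a line. -/
lemma line_second_aux {f : ℂ → ℝ} {z : ℂ} (w : ℂ) (hf : ContDiffAt ℝ 2 f z) :
    HasDerivAt (fun s : ℝ => fderiv ℝ f (z + s • w) w)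
      (fderiv ℝ (fderiv ℝ f) z w w) 0 := by
  have hd : DifferentiableAt ℝ (fderiv ℝ f) z :=
    (hf.fderiv_right (m := 1) (by norm_num)).differentiableAt (by simp)
  have hline : HasDerivAt (fun s : ℝ => z + s • w) w 0 := by
    have h1 : HasDerivAt (fun s : ℝ => s • w) ((1:ℝ) • w) 0 :=
      (hasDerivAt_id 0).smul_const w
    simpa using h1.const_add z
  have hF : HasFDerivAt (fderiv ℝ f) (fderiv ℝ (fderiv ℝ f) z) (z + (0:ℝ) • w) := by
    simpa using hd.hasFDerivAt
  have hcomp : HasDerivAt (fun s : ℝ => fderiv ℝ f (z + s • w))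
      (fderiv ℝ (fderiv ℝ f) z w) 0 := hF.comp_hasDerivAt 0 hline
  have := hcomp.clm_apply (hasDerivAt_const (0:ℝ) w)
  simpa using this

lemma log_line_hasDerivAt_aux (A B t : ℝ) (h : 1 - (A + t)^2 - B^2 ≠ 0) :
    HasDerivAt (fun s : ℝ => Real.log (1 - (A + s)^2 - B^2))
      ((-2*(A+t)) / (1 - (A+t)^2 - B^2)) t := by
  have h1 : HasDerivAt (fun s : ℝ => A + s) 1 t := (hasDerivAt_id t).const_add A
  have h2 := h1.pow 2
  have h3 := (h2.const_sub 1).sub_const (B^2)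
  have hg : HasDerivAt (fun s : ℝ => 1 - (A + s)^2 - B^2) (-2*(A+t)) t := by
    convert h3 using 1 <;> first | rfl | ring
  exact hg.log h

lemma log_line_second_aux (A B : ℝ) (h : (0:ℝ) < 1 - A^2 - B^2) :
    HasDerivAt (fun t : ℝ => (-2*(A+t)) / (1 - (A+t)^2 - B^2))
      ((-2*(1 - A^2 - B^2) - 4*A^2) / (1 - A^2 - B^2)^2) 0 := by
  have hN : HasDerivAt (fun t : ℝ => -2*(A+t)) (-2) 0 := by
    have := ((hasDerivAt_id (0:ℝ)).const_add A).const_mul (-2 : ℝ)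
    simpa using this
  have hD : HasDerivAt (fun t : ℝ => 1 - (A+t)^2 - B^2) (-2*A) 0 := by
    have h1 : HasDerivAt (fun s : ℝ => A + s) 1 0 := (hasDerivAt_id 0).const_add A
    have h3 := ((h1.pow 2).const_sub 1).sub_const (B^2)
    convert h3 using 1 <;> first | rfl | ring
  have hne : (1 : ℝ) - (A+0)^2 - B^2 ≠ 0 := by
    simpa using ne_of_gt h
  have := hN.div hD hne
  convert this using 1 <;> first | rfl | (simp; ring)

lemma norm_sq_eq_aux (z : ℂ) : ‖z‖^2 = z.re^2 + z.im^2 := by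
  rw [← Complex.normSq_eq_norm_sq, Complex.normSq_apply]; ring

/-- At a global max of `u + k log(1-|z|²)` on the disk, the second directional derivative
of `u` is bounded by the data of the logarithmic term. -/
lemma dir_bound_aux (k : ℝ) (hk : 0 < k) (u : ℂ → ℝ)
    (hsmooth : ContDiffOn ℝ 2 u (ball (0:ℂ) 1)) (z₀ w : ℂ) (hz₀ : z₀ ∈ ball (0:ℂ) 1)
    (A B : ℝ)
    (hAB : ∀ t : ℝ, (z₀ + t • w).re^2 + (z₀ + t • w).im^2 = (A+t)^2 + B^2)
    (hmax : ∀ z ∈ ball (0:ℂ) 1,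
      u z + k * Real.log (1 - z.re^2 - z.im^2)
        ≤ u z₀ + k * Real.log (1 - z₀.re^2 - z₀.im^2)) :
    fderiv ℝ (fderiv ℝ u) z₀ w w
      ≤ k * ((2*(1-A^2-B^2) + 4*A^2)/(1-A^2-B^2)^2) := by
  have hz₀AB : z₀.re^2 + z₀.im^2 = A^2 + B^2 := by simpa using hAB 0
  have hposball : ∀ z : ℂ, z ∈ ball (0:ℂ) 1 → 0 < 1 - z.re^2 - z.im^2 := by
    intro z hz
    have h1 : ‖z‖ < 1 := mem_ball_zero_iff.mp hz
    have h2 : ‖z‖^2 < 1 := by nlinarith [norm_nonneg z]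
    rw [norm_sq_eq_aux] at h2; linarith
  have hs : (0:ℝ) < 1 - A^2 - B^2 := by
    have := hposball z₀ hz₀; linarith [hz₀AB]
  have hdiff : ∀ z ∈ ball (0:ℂ) 1, DifferentiableAt ℝ u z := fun z hz =>
    (hsmooth.contDiffAt (isOpen_ball.mem_nhds hz)).differentiableAt (by norm_num)
  set ℓ : ℝ → ℂ := fun t => z₀ + t • w with hℓ
  have hℓ0 : ℓ 0 = z₀ := by simp [hℓ]
  have hℓcont : Continuous ℓ := by fun_prop
  have hmem : ∀ᶠ t in 𝓝 (0:ℝ), ℓ t ∈ ball (0:ℂ) 1 := by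
    have : ℓ ⁻¹' (ball (0:ℂ) 1) ∈ 𝓝 (0:ℝ) := by
      apply hℓcont.continuousAt.preimage_mem_nhds
      rw [hℓ0]; exact isOpen_ball.mem_nhds hz₀
    exact this
  have harg : ∀ t : ℝ, ℓ t ∈ ball (0:ℂ) 1 →
      (1 : ℝ) - (ℓ t).re^2 - (ℓ t).im^2 = 1 - (A+t)^2 - B^2 := by
    intro t _; have := hAB t; simp only [hℓ]; linarith [hAB t]
  set φ : ℝ → ℝ := fun t => u (ℓ t) + k * Real.log (1 - (A+t)^2 - B^2) with hφdef
  set ψ : ℝ → ℝ := fun t =>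
    fderiv ℝ u (ℓ t) w + k * ((-2*(A+t)) / (1 - (A+t)^2 - B^2)) with hψdef
  have hmax' : IsLocalMax φ 0 := by
    filter_upwards [hmem] with t ht
    have h1 := hmax (ℓ t) ht
    have h2 := harg t ht
    have h3 : (1:ℝ) - z₀.re^2 - z₀.im^2 = 1 - (A+0)^2 - B^2 := by
      have := harg 0; rw [hℓ0] at this; simpa using this hz₀
    simp only [hφdef, hℓ0]
    rw [← h2]
    calc u (ℓ t) + k * Real.log (1 - (ℓ t).re^2 - (ℓ t).im^2)
        ≤ u z₀ + k * Real.log (1 - z₀.re^2 - z₀.im^2) := h1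
      _ = u z₀ + k * Real.log (1 - (A+0)^2 - B^2) := by rw [h3]
  have hφ' : ∀ᶠ t in 𝓝 (0:ℝ), HasDerivAt φ (ψ t) t := by
    filter_upwards [hmem] with t ht
    have h1 : HasDerivAt (fun s : ℝ => u (ℓ s)) (fderiv ℝ u (ℓ t) w) t :=
      line_hasDerivAt_aux w t (hdiff _ ht)
    have hne : (1:ℝ) - (A+t)^2 - B^2 ≠ 0 := by
      have := hposball _ ht; rw [harg t ht] at this; exact ne_of_gt this
    have h2 := (log_line_hasDerivAt_aux A B t hne).const_mul k
    exact h1.add h2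
  have hψ' : HasDerivAt ψ
      (fderiv ℝ (fderiv ℝ u) z₀ w w
        + k * ((-2*(1 - A^2 - B^2) - 4*A^2) / (1 - A^2 - B^2)^2)) 0 := by
    have h1 := line_second_aux w (hsmooth.contDiffAt (isOpen_ball.mem_nhds hz₀))
    have h2 := (log_line_second_aux A B hs).const_mul k
    exact h1.add h2
  have hconc := second_deriv_test_aux hmax' hφ' hψ'
  have heq : k * ((2*(1-A^2-B^2) + 4*A^2)/(1-A^2-B^2)^2)
      = -(k * ((-2*(1 - A^2 - B^2) - 4*A^2) / (1 - A^2 - B^2)^2)) := by ring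
  linarith [heq.ge, heq.le]

/-- No bounded C² function on the disk has Laplacian bounded below by
`c/(1-|z|²)²` with `c > 0`. -/
theorem no_bounded_with_laplacian_lower_bound (c : ℝ) (hc : 0 < c) (u : ℂ → ℝ)
    (hsmooth : ContDiffOn ℝ 2 u (ball (0 : ℂ) 1))
    (hbdd : ∃ M : ℝ, ∀ z ∈ ball (0 : ℂ) 1, |u z| ≤ M)
    (hlap : ∀ z ∈ ball (0 : ℂ) 1, c / (1 - ‖z‖ ^ 2) ^ 2 ≤ laplacian u z) :
    False := by
  obtain ⟨M, hM⟩ := hbdd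
  have hkpos : (0:ℝ) < c/8 := by linarith
  set v : ℂ → ℝ := fun z => u z + (c/8) * Real.log (1 - z.re^2 - z.im^2) with hv
  have h0mem : (0:ℂ) ∈ ball (0:ℂ) 1 := mem_ball_self one_pos
  set B : ℝ := (u 0 - M - 1)/(c/8) with hB
  set δ : ℝ := min (Real.exp B) (1/2) with hδ
  have hδpos : 0 < δ := lt_min (Real.exp_pos B) (by norm_num)
  have hδle : δ ≤ 1/2 := min_le_right _ _
  have hlogδ : (c/8) * Real.log δ ≤ u 0 - M - 1 := by
    have h1 : Real.log δ ≤ B := by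
      calc Real.log δ ≤ Real.log (Real.exp B) :=
            Real.log_le_log hδpos (min_le_left _ _)
        _ = B := Real.log_exp B
    have h2 : (c/8) * Real.log δ ≤ (c/8) * B :=
      mul_le_mul_of_nonneg_left h1 (le_of_lt hkpos)
    have h3 : (c/8) * B = u 0 - M - 1 := by
      rw [hB]; field_simp
    linarith
  set r : ℝ := Real.sqrt (1 - δ) with hr
  have hr0 : 0 ≤ r := Real.sqrt_nonneg _
  have hr2 : r^2 = 1 - δ := Real.sq_sqrt (by linarith)
  have hr1 : r < 1 := by
    nlinarith [hr2, hδpos, hr0]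
  have hsub : closedBall (0:ℂ) r ⊆ ball (0:ℂ) 1 := closedBall_subset_ball hr1
  have hposball : ∀ z : ℂ, z ∈ ball (0:ℂ) 1 → 0 < 1 - z.re^2 - z.im^2 := by
    intro z hz
    have h1 : ‖z‖ < 1 := mem_ball_zero_iff.mp hz
    have h2 : ‖z‖^2 < 1 := by nlinarith [norm_nonneg z]
    rw [norm_sq_eq_aux] at h2; linarith
  have hvcont : ContinuousOn v (closedBall (0:ℂ) r) := by
    apply ContinuousOn.add
    · exact hsmooth.continuousOn.mono hsub
    · apply ContinuousOn.mul continuousOn_const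
      intro z hz
      apply ContinuousAt.continuousWithinAt
      have hcont2 : ContinuousAt (fun z : ℂ => 1 - z.re^2 - z.im^2) z := by fun_prop
      exact hcont2.log (ne_of_gt (hposball z (hsub hz)))
  obtain ⟨z₀, hz₀mem, hz₀max⟩ :=
    (isCompact_closedBall (0:ℂ) r).exists_isMaxOn ⟨0, mem_closedBall_self hr0⟩ hvcont
  have hz₀ball : z₀ ∈ ball (0:ℂ) 1 := hsub hz₀mem
  have hv0 : v 0 = u 0 := by simp [hv]
  have hglobal : ∀ z ∈ ball (0:ℂ) 1, v z ≤ v z₀ := by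
    intro z hz
    by_cases hcase : z ∈ closedBall (0:ℂ) r
    · exact hz₀max hcase
    · have hgt : r < ‖z‖ := by
        simp only [mem_closedBall, dist_zero_right, not_le] at hcase; exact hcase
      have h1 : 1 - δ < ‖z‖^2 := by nlinarith
      have hlt : ‖z‖ < 1 := mem_ball_zero_iff.mp hz
      have h2 : 0 < 1 - ‖z‖^2 := by nlinarith [norm_nonneg z]
      have h3 : 1 - ‖z‖^2 ≤ δ := by linarith
      have e : (1:ℝ) - z.re^2 - z.im^2 = 1 - ‖z‖^2 := by rw [norm_sq_eq_aux]; ring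
      have h4 : Real.log (1 - z.re^2 - z.im^2) ≤ Real.log δ := by
        rw [e]; exact Real.log_le_log h2 h3
      have hu : u z ≤ M := (abs_le.mp (hM z hz)).2
      have h5 : (c/8) * Real.log (1 - z.re^2 - z.im^2) ≤ (c/8) * Real.log δ :=
        mul_le_mul_of_nonneg_left h4 (le_of_lt hkpos)
      have h7 : v 0 ≤ v z₀ := hz₀max (mem_closedBall_self hr0)
      have : v z ≤ u 0 - 1 := by
        simp only [hv]; linarith
      linarith [hv0 ▸ h7]
  have hAB1 : ∀ t : ℝ, (z₀ + t • (1:ℂ)).re^2 + (z₀ + t • (1:ℂ)).im^2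
      = (z₀.re + t)^2 + z₀.im^2 := by
    intro t
    simp [Complex.add_re, Complex.add_im, Complex.real_smul, Complex.mul_re,
      Complex.mul_im]
  have hABI : ∀ t : ℝ, (z₀ + t • Complex.I).re^2 + (z₀ + t • Complex.I).im^2
      = (z₀.im + t)^2 + z₀.re^2 := by
    intro t
    simp [Complex.add_re, Complex.add_im, Complex.real_smul, Complex.mul_re,
      Complex.mul_im]
    ring
  have hb1 := dir_bound_aux (c/8) hkpos u hsmooth z₀ 1 hz₀ball z₀.re z₀.im hAB1 hglobal
  have hbI := dir_bound_aux (c/8) hkpos u hsmooth z₀ Complex.I hz₀ball z₀.im z₀.re hABI hglobal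
  have hlapeq : laplacian u z₀
      = fderiv ℝ (fderiv ℝ u) z₀ 1 1 + fderiv ℝ (fderiv ℝ u) z₀ Complex.I Complex.I := by
    rw [laplacian, iteratedFDeriv_two_apply, iteratedFDeriv_two_apply]
    simp
  have hlap0 := hlap z₀ hz₀ball
  rw [hlapeq] at hlap0
  set x : ℝ := z₀.re
  set y : ℝ := z₀.im
  have hs : (0:ℝ) < 1 - x^2 - y^2 := hposball z₀ hz₀ball
  have hzn : ‖z₀‖^2 = x^2 + y^2 := norm_sq_eq_aux z₀
  rw [hzn] at hlap0
  have e0 : (1:ℝ) - y^2 - x^2 = 1 - x^2 - y^2 := by ring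
  rw [e0] at hbI
  have e1 : (c/8) * ((2*(1-x^2-y^2) + 4*x^2)/(1-x^2-y^2)^2)
      + (c/8) * ((2*(1-x^2-y^2) + 4*y^2)/(1-x^2-y^2)^2)
      = c / (2 * (1-x^2-y^2)^2) := by
    have hne : (1-x^2-y^2) ≠ 0 := ne_of_gt hs
    field_simp
    ring
  have hfinal : c / (1 - (x^2+y^2))^2 ≤ c / (2 * (1-x^2-y^2)^2) := by
    calc c / (1 - (x^2+y^2))^2 ≤ _ := hlap0
      _ ≤ _ := by linarith [hb1, hbI, e1.le, e1.ge]
  have he : (1 - (x^2+y^2)) = 1-x^2-y^2 := by ring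
  rw [he, div_le_div_iff₀ (by positivity) (by positivity)] at hfinal
  have h2t : c * (2 * (1-x^2-y^2)^2) = 2*(c*(1-x^2-y^2)^2) := by ring
  have hpp : 0 < c*(1-x^2-y^2)^2 := by positivity
  linarith
end
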